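/- arXiv:0711.2190 — 3 statements merged into one kernel-verified Lean document; each statement's English description precedes it below -/
import Mathlib

section
/- Let λ > 0, δ > 0, ε > 0 with 2ε < 1, and suppose p is a monic irreducible integer polynomial of degree n with all roots in the closed disk of radius λ, such that at least δ·n of its roots lie in the open disk B(β, ε) for some β ∈ ℂ. Then δn(δn − 1) ≤ n² · log(2λ)/|log(2ε)|. -/
open MeasureTheory Polynomial Filter

noncomputable def rootsC (p : Polynomial ℤ) : Multiset ℂ :=
  (p.map (Int.castRingHom ℂ)).roots

open Finset in
private lemma half_prod {d : ℕ} (h : Fin d → Fin d → ℝ)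
    (hsymm : ∀ i j, h i j = h j i) :
    ∏ i, ∏ j ∈ Ioi i, (h i j) ^ 2 = ∏ z ∈ (univ : Finset (Fin d)).offDiag, h z.1 z.2 := by
  have key : ∏ i, ∏ j ∈ Ioi i, h i j
      = ∏ z ∈ (univ : Finset (Fin d)).offDiag.filter (fun z => z.1 < z.2), h z.1 z.2 := by
    rw [← Finset.prod_sigma (univ : Finset (Fin d)) (fun i => Ioi i)
      (fun x => h x.1 x.2)]
    refine Finset.prod_nbij' (fun x => (x.1, x.2)) (fun z => ⟨z.1, z.2⟩) ?_ ?_ ?_ ?_ ?_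
    · intro a ha
      simp only [Finset.mem_sigma, Finset.mem_univ, Finset.mem_Ioi, true_and] at ha
      simp [Finset.mem_filter, Finset.mem_offDiag, ha, ne_of_lt ha]
    · intro a ha
      simp only [Finset.mem_filter, Finset.mem_offDiag] at ha
      simp [ha.2]
    · intro a _; rfl
    · intro a _; rfl
    · intro a _; rfl
  have key2 : ∏ z ∈ (univ : Finset (Fin d)).offDiag.filter (fun z => ¬ z.1 < z.2), h z.1 z.2
      = ∏ z ∈ (univ : Finset (Fin d)).offDiag.filter (fun z => z.1 < z.2), h z.1 z.2 := by
    refine Finset.prod_nbij' Prod.swap Prod.swap ?_ ?_ ?_ ?_ ?_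
    · intro a ha
      simp only [Finset.mem_filter, Finset.mem_offDiag, Finset.mem_univ, true_and] at ha ⊢
      obtain ⟨hne, hlt⟩ := ha
      exact ⟨Ne.symm hne, lt_of_le_of_ne (not_lt.mp hlt) (Ne.symm hne)⟩
    · intro a ha
      simp only [Finset.mem_filter, Finset.mem_offDiag, Finset.mem_univ, true_and] at ha ⊢
      exact ⟨Ne.symm ha.1, not_lt.mpr (le_of_lt ha.2)⟩
    · intro a _; rfl
    · intro a _; rfl
    · intro a _; exact hsymm a.1 a.2
  calc ∏ i, ∏ j ∈ Ioi i, (h i j) ^ 2 = (∏ i, ∏ j ∈ Ioi i, h i j) ^ 2 := by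
        rw [← Finset.prod_pow]; congr 1; ext i; rw [← Finset.prod_pow]
    _ = ∏ z ∈ (univ : Finset (Fin d)).offDiag, h z.1 z.2 := by
        rw [key, sq]
        nth_rewrite 2 [← key2]
        exact Finset.prod_filter_mul_prod_filter_not _ _ _

set_option maxHeartbeats 1000000 in
theorem stmt3 (l δ ε : ℝ) (hl0 : 0 < l) (hl : 1 < 2 * l) (hδ : 0 < δ) (hε : 0 < ε)
    (hε1 : 2 * ε < 1)
    (p : Polynomial ℤ) (hp : p.Monic) (hirr : Irreducible p) (n : ℕ) (hn : p.natDegree = n)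
    (hroots : ∀ α ∈ rootsC p, ‖α‖ ≤ l) (β : ℂ)
    (hcount : δ * n ≤ ((rootsC p).filter (fun z => ‖z - β‖ < ε)).card) :
    δ * n * (δ * n - 1) ≤ (n : ℝ) ^ 2 * Real.log (2 * l) / |Real.log (2 * ε)| := by
  classical
  set q : Polynomial ℚ := p.map (Int.castRingHom ℚ) with hqdef
  have hqm : q.Monic := hp.map _
  have hq0 : q ≠ 0 := hqm.ne_zero
  have hqirr : Irreducible q := by
    have := (Polynomial.Monic.irreducible_iff_irreducible_map_fraction_map (K := ℚ) hp).mp hirr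
    simpa [algebraMap_int_eq] using this
  have hqdeg : q.natDegree = n := by
    rw [hqdef, hp.natDegree_map, hn]
  haveI : Fact (Irreducible q) := ⟨hqirr⟩
  set K := AdjoinRoot q with hK
  let pb : PowerBasis ℚ K := AdjoinRoot.powerBasis hq0
  have hd : pb.dim = n := hqdeg
  haveI : FiniteDimensional ℚ K := pb.finite
  have hcard : Fintype.card (K →ₐ[ℚ] ℂ) = pb.dim := by
    rw [AlgHom.card, pb.finrank]
  let e : Fin pb.dim ≃ (K →ₐ[ℚ] ℂ) := (Fintype.equivFinOfCardEq hcard).symm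
  let f : Fin pb.dim → ℂ := fun i => e i pb.gen
  have hfinj : Function.Injective f := by
    intro i j hij
    exact e.injective (pb.algHom_ext hij)
  have hmapmap : q.map (algebraMap ℚ ℂ) = p.map (Int.castRingHom ℂ) := by
    rw [hqdef, Polynomial.map_map]
    exact congrFun (congrArg Polynomial.map (Subsingleton.elim _ _)) p
  have hmapne : p.map (Int.castRingHom ℂ) ≠ 0 := (hp.map _).ne_zero
  have hfroot : ∀ i, f i ∈ rootsC p := by
    intro i
    have h0 : aeval pb.gen q = 0 := by
      show aeval (AdjoinRoot.root q) q = 0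
      erw [AdjoinRoot.aeval_eq, AdjoinRoot.mk_self]
    have h1 : aeval (f i) q = 0 := by
      show aeval ((e i) pb.gen) q = 0
      rw [Polynomial.aeval_algHom_apply, h0, map_zero]
    rw [rootsC, ← hmapmap, Polynomial.mem_roots (hmapmap ▸ hmapne)]
    rw [Polynomial.IsRoot.def, Polynomial.eval_map, ← Polynomial.aeval_def]
    exact h1
  have hcardroots : Multiset.card (rootsC p) = n := by
    have hs : Splits (p.map (Int.castRingHom ℂ)) :=
      IsAlgClosed.splits _
    have := hs.natDegree_eq_card_roots
    rw [rootsC, ← this, hp.natDegree_map, hn]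
  set F : Finset ℂ := Finset.univ.image f with hF
  have hFcard : F.card = n := by
    rw [hF, Finset.card_image_of_injective _ hfinj, Finset.card_univ, Fintype.card_fin, hd]
  have hle : F.val ≤ rootsC p := by
    rw [Multiset.le_iff_subset F.nodup]
    intro x hx
    rw [Finset.mem_val, hF, Finset.mem_image] at hx
    obtain ⟨i, _, rfl⟩ := hx
    exact hfroot i
  have hEq : rootsC p = F.val := by
    refine (Multiset.eq_of_le_of_card_le hle ?_).symm
    rw [hcardroots]
    show n ≤ Multiset.card F.val
    rw [← Finset.card_def, hFcard]
  set T : Finset (Fin pb.dim) := Finset.univ.filter (fun i => ‖f i - β‖ < ε)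
    with hT
  set k := T.card with hk
  have hkcount : Multiset.card ((rootsC p).filter fun z => ‖z - β‖ < ε) = k := by
    rw [hEq, ← Finset.filter_val, hF, Finset.filter_image, ← Finset.card_def,
      Finset.card_image_of_injective _ hfinj]
  rw [hkcount] at hcount
  -- the discriminant
  have hgen_int : IsIntegral ℤ pb.gen := by
    refine ⟨p, hp, ?_⟩
    have h0 : aeval pb.gen q = 0 := by
      show aeval (AdjoinRoot.root q) q = 0
      erw [AdjoinRoot.aeval_eq, AdjoinRoot.mk_self]
    have : aeval pb.gen p = 0 := by
      rw [← Polynomial.aeval_map_algebraMap ℚ pb.gen p] at *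
      simpa [algebraMap_int_eq] using h0
    simpa [Polynomial.aeval_def] using this
  have hDint : IsIntegral ℤ (Algebra.discr ℚ pb.basis) := by
    refine Algebra.discr_isIntegral ℚ (fun i => ?_)
    rw [pb.basis_eq_pow]
    exact hgen_int.pow _
  obtain ⟨m, hm⟩ := IsIntegrallyClosed.isIntegral_iff.mp hDint
  have hDne : Algebra.discr ℚ pb.basis ≠ 0 := Algebra.discr_not_zero_of_basis ℚ pb.basis
  have hm0 : m ≠ 0 := by
    rintro rfl
    rw [map_zero] at hm
    exact hDne hm.symm
  -- the product formula
  have habs := Algebra.discr_powerBasis_eq_prod ℚ ℂ pb e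
  have hprod : |(m : ℝ)| = ∏ i, ∏ j ∈ Finset.Ioi i, (‖f j - f i‖) ^ 2 := by
    have h1 : algebraMap ℚ ℂ (Algebra.discr ℚ pb.basis) = ((m : ℚ) : ℂ) := by
      rw [← hm, ← IsScalarTower.algebraMap_apply ℤ ℚ ℂ, algebraMap_int_eq]
      simp
    have h2 : ‖algebraMap ℚ ℂ (Algebra.discr ℚ pb.basis)‖
        = ∏ i, ∏ j ∈ Finset.Ioi i, (‖f j - f i‖) ^ 2 := by
      rw [habs, norm_prod]
      refine Finset.prod_congr rfl fun i _ => ?_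
      rw [norm_prod]
      refine Finset.prod_congr rfl fun j _ => ?_
      rw [norm_pow]
    rw [h1] at h2
    rw [← h2]
    simp
  have h1le : (1 : ℝ) ≤ ∏ z ∈ (Finset.univ : Finset (Fin pb.dim)).offDiag,
      ‖f z.1 - f z.2‖ := by
    rw [← half_prod (fun i j => ‖f i - f j‖)
      (fun i j => norm_sub_rev _ _)]
    have : ∏ i, ∏ j ∈ Finset.Ioi i, (‖f i - f j‖) ^ 2
        = ∏ i, ∏ j ∈ Finset.Ioi i, (‖f j - f i‖) ^ 2 := by
      refine Finset.prod_congr rfl fun i _ => Finset.prod_congr rfl fun j _ => ?_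
      rw [norm_sub_rev]
    rw [this, ← hprod]
    exact_mod_cast Int.one_le_abs hm0
  -- bounding the product
  set U := (Finset.univ : Finset (Fin pb.dim)).offDiag with hU
  have hTsub : T.offDiag ⊆ U := Finset.offDiag_mono (Finset.subset_univ T)
  have hsplit : ∏ z ∈ U, ‖f z.1 - f z.2‖
      = (∏ z ∈ U \ T.offDiag, ‖f z.1 - f z.2‖)
        * ∏ z ∈ T.offDiag, ‖f z.1 - f z.2‖ :=
    (Finset.prod_sdiff hTsub).symm
  have hbT : ∏ z ∈ T.offDiag, ‖f z.1 - f z.2‖ ≤ (2 * ε) ^ T.offDiag.card := by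
    rw [← Finset.prod_const]
    refine Finset.prod_le_prod (fun _ _ => norm_nonneg _) fun z hz => ?_
    rw [Finset.mem_offDiag] at hz
    obtain ⟨hz1, hz2, _⟩ := hz
    rw [hT, Finset.mem_filter] at hz1 hz2
    have e1 : f z.1 - f z.2 = (f z.1 - β) - (f z.2 - β) := by ring
    calc ‖f z.1 - f z.2‖ ≤ ‖f z.1 - β‖ + ‖f z.2 - β‖ := by
          rw [e1]
          exact norm_sub_le _ _
      _ ≤ 2 * ε := by linarith [hz1.2, hz2.2]
  have hbU : ∏ z ∈ U \ T.offDiag, ‖f z.1 - f z.2‖ ≤ (2 * l) ^ (n ^ 2) := by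
    calc ∏ z ∈ U \ T.offDiag, ‖f z.1 - f z.2‖
        ≤ (2 * l) ^ (U \ T.offDiag).card := by
          rw [← Finset.prod_const]
          refine Finset.prod_le_prod (fun _ _ => norm_nonneg _) fun z hz => ?_
          have h1 : ‖f z.1‖ ≤ l := hroots _ (hfroot z.1)
          have h2 : ‖f z.2‖ ≤ l := hroots _ (hfroot z.2)
          calc ‖f z.1 - f z.2‖
              ≤ ‖f z.1‖ + ‖f z.2‖ := by
                exact norm_sub_le _ _
            _ ≤ 2 * l := by linarith
      _ ≤ (2 * l) ^ (n ^ 2) := by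
          refine pow_le_pow_right₀ (by linarith) ?_
          calc (U \ T.offDiag).card ≤ U.card := Finset.card_le_card (Finset.sdiff_subset)
            _ ≤ n ^ 2 := by
                rw [hU, Finset.offDiag_card, Finset.card_univ, Fintype.card_fin, hd, sq]
                omega
  -- main inequality
  set M := T.offDiag.card with hM
  have hkey : (1 : ℝ) ≤ (2 * ε) ^ M * (2 * l) ^ (n ^ 2) := by
    calc (1:ℝ) ≤ ∏ z ∈ U, ‖f z.1 - f z.2‖ := h1le
      _ = (∏ z ∈ U \ T.offDiag, ‖f z.1 - f z.2‖)
          * ∏ z ∈ T.offDiag, ‖f z.1 - f z.2‖ := hsplit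
      _ ≤ (2 * l) ^ (n ^ 2) * (2 * ε) ^ M := by
          refine mul_le_mul hbU hbT (Finset.prod_nonneg fun _ _ => norm_nonneg _)
            (by positivity)
      _ = (2 * ε) ^ M * (2 * l) ^ (n ^ 2) := by ring
  have h2ε : (0:ℝ) < 2 * ε := by linarith
  have h2l : (0:ℝ) < 2 * l := by linarith
  have hlogε : Real.log (2 * ε) < 0 := Real.log_neg h2ε hε1
  have hlogl : 0 < Real.log (2 * l) := Real.log_pos hl
  have hlog : (M : ℝ) * |Real.log (2 * ε)| ≤ (n : ℝ) ^ 2 * Real.log (2 * l) := by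
    have h0 : (0:ℝ) ≤ Real.log ((2 * ε) ^ M * (2 * l) ^ (n ^ 2)) := by
      rw [← Real.log_one]
      exact Real.log_le_log (by norm_num) hkey
    rw [Real.log_mul (by positivity) (by positivity), Real.log_pow, Real.log_pow] at h0
    rw [abs_of_neg hlogε]
    push_cast at h0 ⊢
    nlinarith [h0]
  have hMk : (M : ℝ) = (k : ℝ) * ((k : ℝ) - 1) := by
    have h1 : M = k * k - k := by rw [hM, Finset.offDiag_card, hk]
    have h2 : k ≤ k * k := by
      rcases Nat.eq_zero_or_pos k with h | h
      · simp [h]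
      · exact Nat.le_mul_of_pos_left _ h
    rw [h1, Nat.cast_sub h2]
    push_cast
    ring
  have habslog : 0 < |Real.log (2 * ε)| := abs_pos.mpr (ne_of_lt hlogε)
  have hfin : (M : ℝ) ≤ (n : ℝ) ^ 2 * Real.log (2 * l) / |Real.log (2 * ε)| := by
    rw [le_div_iff₀ habslog]
    exact hlog
  have hgoal : δ * n * (δ * n - 1) ≤ (M : ℝ) := by
    rw [hMk]
    by_cases hc : 1 ≤ δ * n
    · exact mul_le_mul hcount (sub_le_sub_right hcount 1) (by linarith) (Nat.cast_nonneg k)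
    · push_neg at hc
      have hd0 : (0:ℝ) ≤ δ * n := by positivity
      have h1 : δ * n * (δ * n - 1) ≤ 0 :=
        mul_nonpos_iff.mpr (Or.inl ⟨hd0, by linarith⟩)
      have h2 : (0:ℝ) ≤ (k : ℝ) * ((k : ℝ) - 1) := by
        rw [← hMk]; exact Nat.cast_nonneg M
      linarith
  exact le_trans hgoal hfin
end

section
/- Let μ be an integer measure without atoms, witnessed by polynomials with all roots in B(0,λ) where 2λ > 1. Then there exists a constant C (one may take C = (log 2λ)^{1/2}) such that for every β ∈ ℂ and every 0 < ε < 1/2, μ(B(β,ε)) ≤ C·|log 2ε|^{−1/2}. -/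
open MeasureTheory Polynomial Filter

open scoped Classical Topology

noncomputable def Delta (p : Polynomial ℤ) : Measure ℂ :=
  (p.natDegree : ENNReal)⁻¹ • ((rootsC p).map (fun α => (Measure.dirac α))).sum

def WeakLim (μs : ℕ → Measure ℂ) (μ : Measure ℂ) : Prop :=
  ∀ f : BoundedContinuousFunction ℂ ℝ,
    Tendsto (fun n => ∫ z, f z ∂(μs n)) atTop (nhds (∫ z, f z ∂μ))

-- tiny multiset helpers
lemma countP_mono' {α : Type*} (P Q : α → Prop) [DecidablePred P] [DecidablePred Q]
    (s : Multiset α) (h : ∀ a ∈ s, P a → Q a) : s.countP P ≤ s.countP Q := by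
  induction s using Multiset.induction_on with
  | empty => simp
  | cons a s ih =>
    rw [Multiset.countP_cons, Multiset.countP_cons]
    have := h a (Multiset.mem_cons_self a s)
    have hs := ih (fun b hb => h b (Multiset.mem_cons_of_mem hb))
    split_ifs with h1 h2
    · omega
    · exact absurd (this h1) h2
    · omega
    · omega

-- M1: Delta as count
lemma sum_dirac_apply (s : Multiset ℂ) (A : Set ℂ) (hA : MeasurableSet A) :
    ((s.map (fun α => (Measure.dirac α : Measure ℂ))).sum) A = (s.countP (· ∈ A) : ℕ) := by
  induction s using Multiset.induction_on with
  | empty => simp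
  | cons a s ih =>
    rw [Multiset.map_cons, Multiset.sum_cons, Measure.add_apply, ih, Measure.dirac_apply' _ hA,
      Multiset.countP_cons]
    simp [Set.indicator_apply]
    split_ifs <;> simp [add_comm]

lemma Delta_apply (p : Polynomial ℤ) (A : Set ℂ) (hA : MeasurableSet A) :
    Delta p A = (p.natDegree : ENNReal)⁻¹ * ((rootsC p).countP (· ∈ A) : ℕ) := by
  rw [Delta, Measure.smul_apply, smul_eq_mul, sum_dirac_apply _ _ hA]

lemma rootsC_card (p : Polynomial ℤ) (hp : p.Monic) :
    Multiset.card (rootsC p) = p.natDegree := by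
  have h1 : (p.map (Int.castRingHom ℂ)).Monic := hp.map _
  have := (Polynomial.splits_iff_card_roots (f := p.map (Int.castRingHom ℂ))).mpr
  have h2 : (p.map (Int.castRingHom ℂ)).roots.card = (p.map (Int.castRingHom ℂ)).natDegree :=
    (Polynomial.splits_iff_card_roots).mp (IsAlgClosed.splits _)
  rw [rootsC, h2, hp.natDegree_map]

lemma Delta_prob (p : Polynomial ℤ) (hp : p.Monic) (hd : p.natDegree ≠ 0) :
    IsProbabilityMeasure (Delta p) := by
  constructor
  have huniv : (((rootsC p).map (fun α => (Measure.dirac α : Measure ℂ))).sum) Set.univ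
      = (Multiset.card (rootsC p) : ℕ) := by
    induction (rootsC p) using Multiset.induction_on with
    | empty => simp
    | cons a s ih =>
      rw [Multiset.map_cons, Multiset.sum_cons, Measure.add_apply, ih]
      simp [add_comm]
  rw [Delta, Measure.smul_apply, smul_eq_mul, huniv, rootsC_card p hp,
    ENNReal.inv_mul_cancel] <;> simp [hd]

-- the discriminant-like product is an integer
lemma prod_pairs_int (q : Polynomial ℤ) (hq : q.Monic) {d : ℕ} (f : Fin d → ℂ)
    (hf : Finset.univ.val.map f = rootsC q) (hd : d = q.natDegree) :
    ∃ m : ℤ, (m : ℂ) = ∏ ij ∈ Finset.univ.offDiag, (f ij.1 - f ij.2) := by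
  set P : MvPolynomial (Fin d) ℤ :=
    ∏ ij ∈ Finset.univ.offDiag, (MvPolynomial.X ij.1 - MvPolynomial.X ij.2) with hP
  have hsym : P.IsSymmetric := by
    intro e
    rw [hP, map_prod]
    refine Finset.prod_nbij' (fun ij => (e ij.1, e ij.2)) (fun ij => (e.symm ij.1, e.symm ij.2))
      ?_ ?_ ?_ ?_ ?_
    · intro ij hij
      simp only [Finset.mem_offDiag] at hij ⊢
      exact ⟨Finset.mem_univ _, Finset.mem_univ _, fun h => hij.2.2 (e.injective h)⟩
    · intro ij hij
      simp only [Finset.mem_offDiag] at hij ⊢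
      exact ⟨Finset.mem_univ _, Finset.mem_univ _, fun h => hij.2.2 (e.symm.injective h)⟩
    · intro ij _; simp
    · intro ij _; simp
    · intro ij _
      simp [map_sub, MvPolynomial.rename_X]
  obtain ⟨g, hg⟩ := MvPolynomial.esymmAlgHom_surjective (R := ℤ) (σ := Fin d) (n := d)
    (le_of_eq (Fintype.card_fin d)) ⟨P, (MvPolynomial.mem_symmetricSubalgebra P).2 hsym⟩
  have hgval : P = MvPolynomial.aeval (fun i : Fin d => MvPolynomial.esymm (Fin d) ℤ (i + 1)) g := by
    have := congrArg Subtype.val hg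
    rw [MvPolynomial.esymmAlgHom_apply] at this
    exact this.symm
  -- the values of the esymms at the roots are integers
  have hesymm : ∀ i : Fin d, ∃ c : ℤ, (MvPolynomial.aeval f) (MvPolynomial.esymm (Fin d) ℤ (i + 1))
      = (c : ℂ) := by
    intro i
    rw [MvPolynomial.aeval_esymm_eq_multiset_esymm, hf]
    -- Vieta: esymm of roots = ± coefficient
    have hmap : (q.map (Int.castRingHom ℂ)).Monic := hq.map _
    have hsplits : (q.map (Int.castRingHom ℂ)).roots.card = q.natDegree := by
      rw [(Polynomial.splits_iff_card_roots).mp (IsAlgClosed.splits _), hq.natDegree_map]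
    have hile : (i : ℕ) + 1 ≤ q.natDegree := by
      have := i.2; omega
    have := Polynomial.coeff_eq_esymm_roots_of_card
      (p := q.map (Int.castRingHom ℂ)) (by rw [hsplits, hq.natDegree_map])
      (k := q.natDegree - (i + 1)) (by rw [hq.natDegree_map]; omega)
    rw [hmap.leadingCoeff, one_mul, hq.natDegree_map] at this
    have h2 : q.natDegree - (q.natDegree - ((i : ℕ) + 1)) = (i : ℕ) + 1 := by omega
    rw [h2] at this
    refine ⟨(-1) ^ ((i : ℕ) + 1) * q.coeff (q.natDegree - (i + 1)), ?_⟩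
    have h3 : rootsC q = (q.map (Int.castRingHom ℂ)).roots := rfl
    rw [h3]
    have h4 := this
    push_cast
    rw [show ((q.map (Int.castRingHom ℂ)).roots.esymm ((i:ℕ)+1)) =
      (-1 : ℂ) ^ ((i:ℕ)+1) * (q.map (Int.castRingHom ℂ)).coeff (q.natDegree - ((i:ℕ)+1)) by
        rw [h4, ← mul_assoc, ← pow_add,
          Even.neg_one_pow ⟨(i:ℕ)+1, by ring⟩, one_mul]]
    rw [Polynomial.coeff_map]
    simp
  choose c hc using hesymm
  -- evaluate via the bottom subalgebra
  have key : (MvPolynomial.aeval f) P ∈ (⊥ : Subalgebra ℤ ℂ) := by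
    rw [hgval]
    have comp : (MvPolynomial.aeval f).comp
        (MvPolynomial.aeval (fun i : Fin d => MvPolynomial.esymm (Fin d) ℤ (i + 1)))
        = MvPolynomial.aeval (fun i : Fin d =>
            (MvPolynomial.aeval f) (MvPolynomial.esymm (Fin d) ℤ (i + 1))) :=
      MvPolynomial.comp_aeval ..
    have : (MvPolynomial.aeval f) ((MvPolynomial.aeval
        (fun i : Fin d => MvPolynomial.esymm (Fin d) ℤ (i + 1))) g)
        = MvPolynomial.aeval (fun i : Fin d =>
            (MvPolynomial.aeval f) (MvPolynomial.esymm (Fin d) ℤ (i + 1))) g := by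
      rw [← comp]; rfl
    rw [this]
    set v : Fin d → (⊥ : Subalgebra ℤ ℂ) := fun i =>
      ⟨(MvPolynomial.aeval f) (MvPolynomial.esymm (Fin d) ℤ (i + 1)),
        by rw [hc i]; exact ⟨c i, by simp⟩⟩ with hv
    have comp2 : ((⊥ : Subalgebra ℤ ℂ).val).comp (MvPolynomial.aeval v)
        = MvPolynomial.aeval (fun i : Fin d =>
            (MvPolynomial.aeval f) (MvPolynomial.esymm (Fin d) ℤ (i + 1))) := by
      rw [MvPolynomial.comp_aeval]; rfl
    rw [← comp2, AlgHom.comp_apply]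
    exact ((MvPolynomial.aeval v) g).2
  rw [Algebra.mem_bot] at key
  obtain ⟨m, hm⟩ := key
  refine ⟨m, ?_⟩
  have : (MvPolynomial.aeval f) P = ∏ ij ∈ Finset.univ.offDiag, (f ij.1 - f ij.2) := by
    rw [hP, map_prod]
    simp [map_sub]
  rw [← this, ← hm]
  simp [Algebra.algebraMap_eq_smul_one]

lemma rootsC_nodup (q : Polynomial ℤ) (hq : q.Monic) (hirr : Irreducible q) :
    (rootsC q).Nodup := by
  have h1 : Irreducible (q.map (Int.castRingHom ℚ)) := by
    exact (hq.irreducible_iff_irreducible_map_fraction_map (K := ℚ)).mp hirr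
  have h2 : (q.map (Int.castRingHom ℚ)).Separable := h1.separable
  have h3 : ((q.map (Int.castRingHom ℚ)).map (algebraMap ℚ ℂ)).Separable := h2.map
  have h4 : (q.map (Int.castRingHom ℂ)) = (q.map (Int.castRingHom ℚ)).map (algebraMap ℚ ℂ) := by
    rw [Polynomial.map_map]
    exact congrArg (fun φ => q.map φ) (Subsingleton.elim _ _)
  rw [rootsC, h4]
  exact Polynomial.nodup_roots h3

lemma irred_count_bound (q : Polynomial ℤ) (hq : q.Monic) (hirr : Irreducible q)
    {l ε : ℝ} (hl : 1 < 2 * l) (hε : 0 < ε) (hε2 : ε < 1 / 2)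
    (hroots : ∀ α ∈ rootsC q, ‖α‖ ≤ l) (β : ℂ) :
    ((rootsC q).countP (· ∈ Metric.ball β ε) : ℝ)
      ≤ 1 + q.natDegree * (Real.sqrt (Real.log (2*l)) * |Real.log (2*ε)| ^ (-(1/2) : ℝ)) := by
  set A : ℝ := |Real.log (2*ε)| with hA
  have hlog2ε : Real.log (2*ε) < 0 := Real.log_neg (by linarith) (by linarith)
  have hApos : 0 < A := by rw [hA, abs_of_neg hlog2ε]; linarith
  have hAeq : A = -Real.log (2*ε) := by rw [hA, abs_of_neg hlog2ε]
  have hlogl : 0 < Real.log (2*l) := Real.log_pos hl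
  have htpos : (0:ℝ) ≤ Real.sqrt (Real.log (2*l)) * A ^ (-(1/2) : ℝ) := by positivity
  -- enumerate roots
  set L : List ℂ := (rootsC q).toList with hL
  set d : ℕ := L.length with hd
  set f : Fin d → ℂ := L.get with hfdef
  have hLcoe : (L : Multiset ℂ) = rootsC q := Multiset.coe_toList _
  have hfmap : Finset.univ.val.map f = rootsC q := by
    rw [← hLcoe]
    rw [show (Finset.univ.val : Multiset (Fin d)) = ↑(List.finRange d) from rfl,
      Multiset.map_coe, List.map_get_finRange L]
  have hdd : d = q.natDegree := by
    rw [hd, ← rootsC_card q hq, ← hLcoe]; simp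
  have hnodup : L.Nodup := by
    have := rootsC_nodup q hq hirr
    rw [← hLcoe, Multiset.coe_nodup] at this
    exact this
  have hinj : Function.Injective f := List.nodup_iff_injective_get.mp hnodup
  -- the count as a Finset card
  set T : Finset (Fin d) := Finset.univ.filter (fun i => f i ∈ Metric.ball β ε) with hT
  set k : ℕ := T.card with hk
  have hkcount : (rootsC q).countP (· ∈ Metric.ball β ε) = k := by
    rw [← hfmap, Multiset.countP_map, hk]
    have hval : T.val = Finset.univ.val.filter (fun i => f i ∈ Metric.ball β ε) :=
      Finset.filter_val _ _
    rw [Finset.card_def, hval]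
  -- the product bound
  obtain ⟨m, hm⟩ := prod_pairs_int q hq f hfmap hdd
  have hmne : m ≠ 0 := by
    intro h0
    rw [h0] at hm
    have := hm.symm
    rw [Int.cast_zero] at this
    obtain ⟨ij, hij, hfij⟩ := Finset.prod_eq_zero_iff.mp this
    rw [sub_eq_zero] at hfij
    exact (Finset.mem_offDiag.mp hij).2.2 (hinj hfij)
  have hprod1 : (1:ℝ) ≤ ∏ ij ∈ Finset.univ.offDiag, ‖f ij.1 - f ij.2‖ := by
    rw [← norm_prod, ← hm, Complex.norm_intCast]
    exact_mod_cast Int.one_le_abs hmne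
  have hsub : T.offDiag ⊆ Finset.univ.offDiag := by
    intro ij hij
    rw [Finset.mem_offDiag] at hij ⊢
    exact ⟨Finset.mem_univ _, Finset.mem_univ _, hij.2.2⟩
  -- split the product
  have hsplit := Finset.prod_sdiff (f := fun ij => ‖f ij.1 - f ij.2‖) hsub
  set a : ℕ := T.offDiag.card with ha
  set b : ℕ := (Finset.univ.offDiag \ T.offDiag).card with hb
  clear hfdef
  clear_value A L d f T k a b
  have hbound1 : ∏ ij ∈ T.offDiag, ‖f ij.1 - f ij.2‖ ≤ (2*ε)^a := by
    rw [ha, ← Finset.prod_const]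
    apply Finset.prod_le_prod (fun ij _ => by positivity)
    intro ij hij
    · 
      rw [Finset.mem_offDiag] at hij
      have h1 : f ij.1 ∈ Metric.ball β ε := by
        have := hij.1; rw [hT, Finset.mem_filter] at this; exact this.2
      have h2 : f ij.2 ∈ Metric.ball β ε := by
        have := hij.2.1; rw [hT, Finset.mem_filter] at this; exact this.2
      rw [Metric.mem_ball] at h1 h2
      have := dist_triangle (f ij.1) β (f ij.2)
      rw [← Complex.dist_eq]
      rw [dist_comm β (f ij.2)] at this
      linarith
  have hbound2 : ∏ ij ∈ Finset.univ.offDiag \ T.offDiag, ‖f ij.1 - f ij.2‖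
      ≤ (2*l)^b := by
    rw [hb, ← Finset.prod_const]
    apply Finset.prod_le_prod (fun ij _ => by positivity)
    intro ij _
    · 
      have hmem : ∀ i : Fin d, ‖f i‖ ≤ l := by
        intro i
        apply hroots
        rw [← hfmap]
        exact Multiset.mem_map_of_mem f (Finset.mem_univ i)
      calc ‖f ij.1 - f ij.2‖ = ‖f ij.1 - f ij.2‖ := rfl
        _ ≤ ‖f ij.1‖ + ‖f ij.2‖ := norm_sub_le _ _
        _ ≤ l + l := add_le_add (hmem _) (hmem _)
        _ = 2*l := by ring
  have hprodpos : (0:ℝ) < ∏ ij ∈ T.offDiag, ‖f ij.1 - f ij.2‖ := by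
    apply Finset.prod_pos
    intro ij hij
    rw [Finset.mem_offDiag] at hij
    have : f ij.1 ≠ f ij.2 := fun h => hij.2.2 (hinj h)
    simpa [sub_eq_zero] using this
  have hprodpos2 : (0:ℝ) < ∏ ij ∈ Finset.univ.offDiag \ T.offDiag,
      ‖f ij.1 - f ij.2‖ := by
    apply Finset.prod_pos
    intro ij hij
    rw [Finset.mem_sdiff, Finset.mem_offDiag] at hij
    have : f ij.1 ≠ f ij.2 := fun h => hij.1.2.2 (hinj h)
    simpa [sub_eq_zero] using this
  have hx : (1:ℝ) ≤ (2*ε)^a * (2*l)^b := by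
    calc (1:ℝ) ≤ ∏ ij ∈ Finset.univ.offDiag, ‖f ij.1 - f ij.2‖ := hprod1
      _ = (∏ ij ∈ Finset.univ.offDiag \ T.offDiag, ‖f ij.1 - f ij.2‖)
          * ∏ ij ∈ T.offDiag, ‖f ij.1 - f ij.2‖ := hsplit.symm
      _ ≤ (2*l)^b * (2*ε)^a := by
        apply mul_le_mul hbound2 hbound1 (le_of_lt hprodpos) (by positivity)
      _ = (2*ε)^a * (2*l)^b := by ring
  -- take logs
  have hlogineq : 0 ≤ a * Real.log (2*ε) + b * Real.log (2*l) := by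
    have h0 := Real.log_nonneg hx
    rw [Real.log_mul (by positivity) (by positivity), Real.log_pow, Real.log_pow] at h0
    exact_mod_cast h0
  have hkey : (a:ℝ) * A ≤ (d:ℝ)^2 * Real.log (2*l) := by
    have hble : (b:ℝ) ≤ (d:ℝ)^2 := by
      have h1 : b ≤ (Finset.univ : Finset (Fin d)).offDiag.card :=
        hb ▸ Finset.card_le_card (Finset.sdiff_subset)
      have h2 : ((Finset.univ : Finset (Fin d)).offDiag.card : ℕ) = d * d - d := by
        rw [Finset.offDiag_card]; simp
      have : b ≤ d * d := by omega
      have := (Nat.cast_le (α := ℝ)).mpr this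
      push_cast at this ⊢
      nlinarith
    rw [hAeq]
    nlinarith [mul_le_mul_of_nonneg_right hble (le_of_lt hlogl)]
  have haek : a = k*k - k := by rw [ha, Finset.offDiag_card, ← hk]
  -- conclude
  clear hm hprod1 hsplit hbound1 hbound2 hprodpos hprodpos2 hx hlogineq hT hsub hinj hfmap
  clear hroots hLcoe hnodup hL hd ha hb hk T f L hirr hq
  rw [hkcount]
  rcases Nat.eq_zero_or_pos k with hk0 | hk1
  · rw [hk0]
    push_cast
    nlinarith [mul_nonneg (Nat.cast_nonneg (α := ℝ) q.natDegree) htpos]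
  · have hae : (a:ℝ) = (k:ℝ)*(k:ℝ) - (k:ℝ) := by
      rw [haek]
      have : k ≤ k * k := Nat.le_mul_of_pos_left k hk1
      push_cast [Nat.cast_sub this]
      ring
    have hsq : ((k:ℝ) - 1)^2 * A ≤ (d:ℝ)^2 * Real.log (2*l) := by
      have h1 : ((k:ℝ) - 1)^2 ≤ (a:ℝ) := by
        rw [hae]
        have : (1:ℝ) ≤ (k:ℝ) := by exact_mod_cast hk1
        nlinarith
      calc ((k:ℝ) - 1)^2 * A ≤ (a:ℝ) * A :=
            mul_le_mul_of_nonneg_right h1 (le_of_lt hApos)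
        _ ≤ (d:ℝ)^2 * Real.log (2*l) := hkey
    have hk1R : (0:ℝ) ≤ (k:ℝ) - 1 := by
      have : (1:ℝ) ≤ (k:ℝ) := by exact_mod_cast hk1
      linarith
    have hdiv : ((k:ℝ) - 1)^2 ≤ (d:ℝ)^2 * Real.log (2*l) / A := by
      rw [le_div_iff₀ hApos]
      exact hsq
    have hfin : (k:ℝ) - 1 ≤ (d:ℝ) * (Real.sqrt (Real.log (2*l)) * A ^ (-(1/2) : ℝ)) := by
      have h1 : (k:ℝ) - 1 ≤ Real.sqrt ((d:ℝ)^2 * Real.log (2*l) / A) := by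
        rw [show ((k:ℝ) - 1) = Real.sqrt (((k:ℝ)-1)^2) from (Real.sqrt_sq hk1R).symm]
        exact Real.sqrt_le_sqrt hdiv
      have h2 : Real.sqrt ((d:ℝ)^2 * Real.log (2*l) / A)
          = (d:ℝ) * (Real.sqrt (Real.log (2*l)) * A ^ (-(1/2) : ℝ)) := by
        rw [div_eq_mul_inv, Real.sqrt_mul (by positivity), Real.sqrt_mul (by positivity),
          Real.sqrt_sq (Nat.cast_nonneg d), Real.sqrt_inv,
          Real.rpow_neg (le_of_lt hApos), ← Real.sqrt_eq_rpow, mul_assoc]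
      rw [← h2]
      exact h1
    have : (d:ℝ) = (q.natDegree : ℝ) := by exact_mod_cast hdd
    rw [← this]
    linarith

def SD (l : ℝ) (D : ℕ) : Set ℂ :=
  {z : ℂ | ∃ q : Polynomial ℤ, q.Monic ∧ q.natDegree ≤ D ∧
    (∀ α ∈ rootsC q, ‖α‖ ≤ l) ∧ z ∈ rootsC q}

set_option maxHeartbeats 1000000 in
lemma SD_finite (l : ℝ) (D : ℕ) : (SD l D).Finite := by
  set B : ℤ := ⌈max l 1 ^ D * D.choose (D/2)⌉ with hB
  have h := Polynomial.bUnion_roots_finite (Int.castRingHom ℂ) D (Set.finite_Icc (-B) B)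
  apply h.subset
  rintro z ⟨q, hq, hdeg, hb, hz⟩
  rw [Set.mem_iUnion]
  refine ⟨q, ?_⟩
  rw [Set.mem_iUnion]
  refine ⟨⟨hdeg, fun i => ?_⟩, ?_⟩
  · have hcb := Polynomial.coeff_bdd_of_roots_le (Int.castRingHom ℂ) hq
      (IsAlgClosed.splits _) hdeg
      (fun z hz => by exact hb z hz) i
    rw [Polynomial.coeff_map] at hcb
    have : ‖((q.coeff i : ℤ) : ℂ)‖ = |(q.coeff i : ℝ)| := by
      rw [show ((q.coeff i : ℤ) : ℂ) = ((q.coeff i : ℝ) : ℂ) by push_cast; ring,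
        Complex.norm_real, Real.norm_eq_abs]
    rw [show (Int.castRingHom ℂ) (q.coeff i) = ((q.coeff i : ℤ) : ℂ) from rfl, this] at hcb
    rw [Set.mem_Icc, ← abs_le]
    have h2 : |(q.coeff i : ℝ)| ≤ (B : ℝ) := hcb.trans (Int.le_ceil _)
    exact_mod_cast h2
  · rw [Finset.mem_coe, Multiset.mem_toFinset]
    exact hz

lemma monic_factorization (P : Polynomial ℤ) (hP : P.Monic) :
    ∃ F : Multiset (Polynomial ℤ), (∀ q ∈ F, q.Monic ∧ Irreducible q) ∧ F.prod = P := by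
  suffices h : ∀ n : ℕ, ∀ P : Polynomial ℤ, P.Monic → P.natDegree = n →
      ∃ F : Multiset (Polynomial ℤ), (∀ q ∈ F, q.Monic ∧ Irreducible q) ∧ F.prod = P by
    exact h P.natDegree P hP rfl
  intro n
  induction n using Nat.strong_induction_on with
  | _ n ih =>
    intro P hP hn
    rcases Nat.eq_zero_or_pos n with h0 | hpos
    · refine ⟨0, by simp, ?_⟩
      rw [Multiset.prod_zero]
      exact (hP.natDegree_eq_zero.mp (hn.trans h0)).symm
    · have hne : P ≠ 0 := hP.ne_zero
      have hnu : ¬ IsUnit P := by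
        intro hu
        rw [Polynomial.natDegree_eq_zero_of_isUnit hu] at hn
        omega
      obtain ⟨q, hqirr, r, hr⟩ := WfDvdMonoid.exists_irreducible_factor hnu hne
      have hlc : q.leadingCoeff * r.leadingCoeff = 1 := by
        rw [← Polynomial.leadingCoeff_mul, ← hr, hP.leadingCoeff]
      have hqu : q.leadingCoeff = 1 ∨ q.leadingCoeff = -1 :=
        Int.isUnit_iff.mp (IsUnit.of_mul_eq_one _ hlc)
      set c : ℤ := q.leadingCoeff with hc
      have hcc : c * c = 1 := by rcases hqu with h | h <;> rw [← hc] at * <;> rw [h] <;> ring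
      set q' : Polynomial ℤ := Polynomial.C c * q with hq'
      set r' : Polynomial ℤ := Polynomial.C c * r with hr'
      have hP' : P = q' * r' := by
        rw [hq', hr', mul_mul_mul_comm, ← Polynomial.C_mul, hcc, Polynomial.C_1, one_mul]
        exact hr
      have hq'm : q'.Monic := by
        rw [Polynomial.Monic, hq', Polynomial.leadingCoeff_mul, Polynomial.leadingCoeff_C, ← hc,
          hcc]
      have hr'm : r'.Monic := by
        rw [Polynomial.Monic, hr', Polynomial.leadingCoeff_mul, Polynomial.leadingCoeff_C]
        rcases hqu with h | h <;> rw [← hc] at * <;> rw [h] <;> rw [h] at hlc <;> linarith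
      have hq'irr : Irreducible q' := by
        have : Associated q q' := ⟨(Int.isUnit_iff.mpr hqu).unit.map Polynomial.C.toMonoidHom,
          by simp [hq', mul_comm]⟩
        exact this.irreducible hqirr
      have hq'deg : 0 < q'.natDegree := by
        rcases Nat.eq_zero_or_pos q'.natDegree with h | h
        · exact absurd (hq'm.natDegree_eq_zero.mp h ▸ isUnit_one) hq'irr.not_isUnit
        · exact h
      have hdeg : P.natDegree = q'.natDegree + r'.natDegree := by
        rw [hP', Polynomial.natDegree_mul hq'm.ne_zero hr'm.ne_zero]
      have hlt : r'.natDegree < n := by omega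
      obtain ⟨F', hF', hF'prod⟩ := ih r'.natDegree hlt r' hr'm rfl
      refine ⟨q' ::ₘ F', ?_, ?_⟩
      · intro x hx
        rcases Multiset.mem_cons.mp hx with h | h
        · rw [h]; exact ⟨hq'm, hq'irr⟩
        · exact hF' x h
      · rw [Multiset.prod_cons, hF'prod, hP']

lemma countP_bind {α β : Type*} (F : Multiset α) (g : α → Multiset β) (pr : β → Prop)
    [DecidablePred pr] :
    (F.bind g).countP pr = (F.map fun a => (g a).countP pr).sum := by
  induction F using Multiset.induction_on with
  | empty => simp
  | cons a s ih => simp [Multiset.cons_bind, ih]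

lemma rootsC_bind (F : Multiset (Polynomial ℤ)) (h0 : ∀ q ∈ F, q ≠ 0) :
    rootsC F.prod = F.bind rootsC := by
  induction F using Multiset.induction_on with
  | empty => simp [rootsC]
  | cons a s ih =>
    have ha : a ≠ 0 := h0 a (Multiset.mem_cons_self a s)
    have hs : ∀ q ∈ s, q ≠ 0 := fun q hq => h0 q (Multiset.mem_cons_of_mem hq)
    have hprodne : s.prod ≠ 0 := Multiset.prod_ne_zero (fun h => hs 0 h rfl)
    have hmapa : Polynomial.map (Int.castRingHom ℂ) a ≠ 0 :=
      (Polynomial.map_ne_zero_iff (RingHom.injective_int _)).mpr ha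
    have hmaps : Polynomial.map (Int.castRingHom ℂ) s.prod ≠ 0 :=
      (Polynomial.map_ne_zero_iff (RingHom.injective_int _)).mpr hprodne
    rw [Multiset.prod_cons, Multiset.cons_bind, ← ih hs]
    show ((a * s.prod).map (Int.castRingHom ℂ)).roots = _
    rw [Polynomial.map_mul, Polynomial.roots_mul (mul_ne_zero hmapa hmaps)]
    rfl

lemma per_poly (P : Polynomial ℤ) (hP : P.Monic) (hd : P.natDegree ≠ 0)
    {l ε : ℝ} (hl : 1 < 2*l) (hε : 0 < ε) (hε2 : ε < 1/2)
    (hroots : ∀ α ∈ rootsC P, ‖α‖ ≤ l) (β : ℂ) (D : ℕ) (hD : 0 < D) :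
    Delta P (Metric.ball β ε) ≤ Delta P (SD l D)
      + ENNReal.ofReal (1/D + Real.sqrt (Real.log (2*l)) * |Real.log (2*ε)| ^ (-(1/2) : ℝ)) := by
  set c : ℝ := Real.sqrt (Real.log (2*l)) * |Real.log (2*ε)| ^ (-(1/2) : ℝ) with hc
  have hc0 : 0 ≤ c := by positivity
  obtain ⟨F, hF, hFprod⟩ := monic_factorization P hP
  have hF0 : ∀ q ∈ F, q ≠ 0 := fun q hq => (hF q hq).1.ne_zero
  have hbind : rootsC P = F.bind rootsC := by rw [← hFprod]; exact rootsC_bind F hF0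
  have hdeg : (F.map Polynomial.natDegree).sum = P.natDegree := by
    rw [← hFprod]
    exact (Polynomial.natDegree_multiset_prod_of_monic F (fun q hq => (hF q hq).1)).symm
  -- per factor bound in ℝ
  have hperq : ∀ q ∈ F, ((rootsC q).countP (· ∈ Metric.ball β ε) : ℝ)
      ≤ ((rootsC q).countP (· ∈ SD l D) : ℝ) + q.natDegree * (1/D + c) := by
    intro q hq
    obtain ⟨hqm, hqirr⟩ := hF q hq
    have hqroots : ∀ α ∈ rootsC q, ‖α‖ ≤ l := by
      intro α hα
      apply hroots
      rw [hbind]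
      exact Multiset.mem_bind.mpr ⟨q, hq, hα⟩
    rcases le_or_gt q.natDegree D with hcase | hcase
    · have h1 : (rootsC q).countP (· ∈ Metric.ball β ε) ≤ (rootsC q).countP (· ∈ SD l D) := by
        apply countP_mono'
        intro α hα _
        exact ⟨q, hqm, hcase, hqroots, hα⟩
      have h2 : (0:ℝ) ≤ q.natDegree * (1/D + c) := by positivity
      have := (Nat.cast_le (α := ℝ)).mpr h1
      linarith
    · have h1 := irred_count_bound q hqm hqirr hl hε hε2 hqroots β
      have h2 : (1:ℝ) ≤ q.natDegree * (1/D) := by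
        rw [mul_one_div, le_div_iff₀ (by exact_mod_cast hD)]
        have : D + 1 ≤ q.natDegree := hcase
        have := (Nat.cast_le (α := ℝ)).mpr this
        push_cast at this
        linarith
      have h3 : (0:ℝ) ≤ ((rootsC q).countP (· ∈ SD l D) : ℝ) := Nat.cast_nonneg _
      have h4 : (0:ℝ) ≤ (q.natDegree : ℝ) := Nat.cast_nonneg _
      calc ((rootsC q).countP (· ∈ Metric.ball β ε) : ℝ)
          ≤ 1 + q.natDegree * c := by rw [← hc] at h1; exact h1
        _ ≤ q.natDegree * (1/D) + q.natDegree * c := by linarith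
        _ ≤ ((rootsC q).countP (· ∈ SD l D) : ℝ) + q.natDegree * (1/D + c) := by
            rw [mul_add]; linarith
  -- sum up
  have hsum : ((rootsC P).countP (· ∈ Metric.ball β ε) : ℝ)
      ≤ ((rootsC P).countP (· ∈ SD l D) : ℝ) + P.natDegree * (1/D + c) := by
    rw [hbind, countP_bind, countP_bind]
    rw [← hdeg]
    have hlhs : (((F.map fun a => (rootsC a).countP (· ∈ Metric.ball β ε)).sum : ℕ) : ℝ)
        = (F.map fun a => ((rootsC a).countP (· ∈ Metric.ball β ε) : ℝ)).sum := by
      rw [Nat.cast_multiset_sum, Multiset.map_map]; rfl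
    have hrhs : (((F.map fun a => (rootsC a).countP (· ∈ SD l D)).sum : ℕ) : ℝ)
        = (F.map fun a => ((rootsC a).countP (· ∈ SD l D) : ℝ)).sum := by
      rw [Nat.cast_multiset_sum, Multiset.map_map]; rfl
    have hdegcast : (((F.map Polynomial.natDegree).sum : ℕ) : ℝ)
        = (F.map fun a => (a.natDegree : ℝ)).sum := by
      rw [Nat.cast_multiset_sum, Multiset.map_map]; rfl
    rw [hlhs, hrhs, hdegcast]
    have step := Multiset.sum_map_le_sum_map
      (f := fun q => ((rootsC q).countP (· ∈ Metric.ball β ε) : ℝ))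
      (g := fun q => ((rootsC q).countP (· ∈ SD l D) : ℝ) + q.natDegree * (1/D + c))
      (s := F) hperq
    refine step.trans (le_of_eq ?_)
    rw [Multiset.sum_map_add]
    congr 1
    rw [← Multiset.sum_map_mul_right]
  -- convert to measures
  have hmeas1 : MeasurableSet (Metric.ball β ε) := Metric.isOpen_ball.measurableSet
  have hmeas2 : MeasurableSet (SD l D) := (SD_finite l D).measurableSet
  rw [Delta_apply _ _ hmeas1, Delta_apply _ _ hmeas2]
  have hdpos : (0:ℝ) < P.natDegree := by
    have : 0 < P.natDegree := Nat.pos_of_ne_zero hd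
    exact_mod_cast this
  have hconv : ∀ m : ℕ, (P.natDegree : ENNReal)⁻¹ * (m : ℕ)
      = ENNReal.ofReal ((m : ℝ) / P.natDegree) := by
    intro m
    rw [ENNReal.ofReal_div_of_pos hdpos, ENNReal.ofReal_natCast, ENNReal.ofReal_natCast,
      ENNReal.div_eq_inv_mul]
  rw [hconv, hconv, ← ENNReal.ofReal_add (by positivity) (by positivity)]
  apply ENNReal.ofReal_le_ofReal
  rw [div_add' _ _ _ (ne_of_gt hdpos)] at *
  rw [div_le_div_iff_of_pos_right hdpos] at *
  linarith [hsum]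

theorem stmt8 (μ : Measure ℂ) (hμ : IsProbabilityMeasure μ) (p : ℕ → Polynomial ℤ) (l : ℝ)
    (hl : 1 < 2 * l)
    (hm : ∀ n, (p n).Monic) (hb : ∀ n, ∀ α ∈ rootsC (p n), ‖α‖ ≤ l)
    (hw : WeakLim (fun n => Delta (p n)) μ)
    (hatomless : ∀ z : ℂ, μ {z} = 0) :
    ∃ C : ℝ, C = Real.sqrt (Real.log (2 * l)) ∧
      ∀ (β : ℂ) (ε : ℝ), 0 < ε → ε < 1 / 2 →
        μ (Metric.ball β ε) ≤ ENNReal.ofReal (C * |Real.log (2 * ε)| ^ (-(1/2) : ℝ)) := by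
  refine ⟨Real.sqrt (Real.log (2 * l)), rfl, ?_⟩
  intro β ε hε hε2
  set B : ℝ := Real.sqrt (Real.log (2 * l)) * |Real.log (2 * ε)| ^ (-(1/2) : ℝ) with hB
  -- eventually the polynomials have positive degree
  have hNdeg : ∀ᶠ n in atTop, (p n).natDegree ≠ 0 := by
    by_contra hcon
    rw [Filter.not_eventually] at hcon
    have hone := hw (BoundedContinuousFunction.const ℂ (1:ℝ))
    have hμ1 : ∫ z, (BoundedContinuousFunction.const ℂ (1:ℝ)) z ∂μ = 1 := by
      simp [integral_const, hμ.measure_univ]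
    rw [hμ1] at hone
    have hfreq : ∃ᶠ n in atTop,
        (fun n => ∫ z, (BoundedContinuousFunction.const ℂ (1:ℝ)) z ∂(Delta (p n))) n
        = (fun _ => (0:ℝ)) n := by
      apply hcon.mono
      intro n hn
      rw [Classical.not_not] at hn
      have hp1 : p n = 1 := (hm n).natDegree_eq_zero.mp hn
      have : Delta (p n) = 0 := by
        rw [Delta, hp1]
        simp [rootsC]
      dsimp only
      rw [this]
      simp
    have := tendsto_nhds_unique_of_frequently_eq hone tendsto_const_nhds hfreq
    norm_num at this
  obtain ⟨N, hN⟩ := Filter.eventually_atTop.mp hNdeg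
  -- probability measure versions
  set ν : ℕ → ProbabilityMeasure ℂ := fun n =>
    if h : (p n).natDegree = 0 then ⟨μ, hμ⟩ else ⟨Delta (p n), Delta_prob _ (hm n) h⟩ with hν
  have hνeq : ∀ n ≥ N, (ν n : Measure ℂ) = Delta (p n) := by
    intro n hn
    rw [hν]
    exact congrArg Subtype.val (dif_neg (hN n hn))
  have hνlim : Tendsto ν atTop (𝓝 (⟨μ, hμ⟩ : ProbabilityMeasure ℂ)) := by
    refine (ProbabilityMeasure.tendsto_iff_forall_integral_tendsto).2 ?_
    intro f
    apply (hw f).congr'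
    filter_upwards [Filter.eventually_atTop.mpr ⟨N, fun n hn => hνeq n hn⟩] with n hn
    rw [hn]
  -- portmanteau
  have hopen : (μ : Measure ℂ) (Metric.ball β ε)
      ≤ atTop.liminf fun n => (ν n : Measure ℂ) (Metric.ball β ε) :=
    ProbabilityMeasure.le_liminf_measure_open_of_tendsto hνlim Metric.isOpen_ball
  -- for each D, bound the liminf
  have hDbound : ∀ D : ℕ, 0 < D →
      μ (Metric.ball β ε) ≤ ENNReal.ofReal (1/D + B) := by
    intro D hD
    have hclosed : atTop.limsup (fun n => (ν n : Measure ℂ) (SD l D)) ≤ μ (SD l D) :=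
      ProbabilityMeasure.limsup_measure_closed_le_of_tendsto hνlim
        (SD_finite l D).isClosed
    have hSD0 : μ (SD l D) = 0 := by
      rw [← Set.biUnion_of_singleton (SD l D)]
      exact (measure_biUnion_null_iff (SD_finite l D).countable).mpr (fun z _ => hatomless z)
    rw [hSD0] at hclosed
    have hlimsup0 : atTop.limsup (fun n => (ν n : Measure ℂ) (SD l D)) = 0 :=
      le_antisymm hclosed zero_le
    have htend0 : Tendsto (fun n => (ν n : Measure ℂ) (SD l D)) atTop (𝓝 0) := by
      apply tendsto_of_liminf_eq_limsup _ hlimsup0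
      apply le_antisymm _ zero_le
      exact (Filter.liminf_le_limsup).trans_eq hlimsup0
    have htendc : Tendsto (fun n => (ν n : Measure ℂ) (SD l D) + ENNReal.ofReal (1/D + B))
        atTop (𝓝 (ENNReal.ofReal (1/D + B))) := by
      have := htend0.add (tendsto_const_nhds :
        Tendsto (fun _ : ℕ => ENNReal.ofReal (1/D + B)) atTop _)
      rwa [zero_add] at this
    have hle : ∀ᶠ n in atTop, (ν n : Measure ℂ) (Metric.ball β ε)
        ≤ (ν n : Measure ℂ) (SD l D) + ENNReal.ofReal (1/D + B) := by
      filter_upwards [Filter.eventually_atTop.mpr ⟨N, fun n hn => hn⟩] with n hn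
      rw [hνeq n hn]
      exact per_poly (p n) (hm n) (hN n hn) hl hε hε2 (hb n) β D hD
    calc μ (Metric.ball β ε)
        ≤ atTop.liminf (fun n => (ν n : Measure ℂ) (Metric.ball β ε)) := hopen
      _ ≤ atTop.liminf (fun n => (ν n : Measure ℂ) (SD l D) + ENNReal.ofReal (1/D + B)) :=
          Filter.liminf_le_liminf hle
      _ = ENNReal.ofReal (1/D + B) := htendc.liminf_eq
  -- let D → ∞
  have htendD : Tendsto (fun D : ℕ => ENNReal.ofReal (1/D + B)) atTop
      (𝓝 (ENNReal.ofReal B)) := by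
    have h1 : Tendsto (fun D : ℕ => 1/(D:ℝ) + B) atTop (𝓝 (0 + B)) :=
      (tendsto_one_div_atTop_nhds_zero_nat).add tendsto_const_nhds
    rw [zero_add] at h1
    exact (ENNReal.continuous_ofReal.tendsto B).comp h1
  have : μ (Metric.ball β ε) ≤ ENNReal.ofReal B :=
    ge_of_tendsto htendD (Filter.eventually_atTop.mpr
      ⟨1, fun D hD => hDbound D (by omega)⟩)
  exact this
end

section
/- The map log det on the space of integer measures is not weakly continuous: for λ an even integer ≥ 4, the polynomials pₙ(t) = tⁿ + (λ^{n−1}/2)t + 2 are monic with integer coefficients, have all roots in B(0,λ), have exactly one root in B(0,1), and that root t₀ satisfies |t₀| ≤ λ^{1−n/2}; consequently limsupₙ ∫_{z≠0} log|z| dΔ(pₙ)(z) < ∫_{z≠0} log|z| dμ(z) for any weak limit point μ of Δ(pₙ). -/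
open MeasureTheory Polynomial Filter

lemma integrable_dirac'' (f : ℂ → ℝ) (a : ℂ) : Integrable f (Measure.dirac a) := by
  have hae : f =ᵐ[Measure.dirac a] fun _ => f a := by
    rw [MeasureTheory.ae_dirac_eq]; exact Filter.eventually_pure.2 rfl
  constructor
  · exact aestronglyMeasurable_const.congr hae.symm
  · rw [hasFiniteIntegral_congr hae]
    simp [HasFiniteIntegral]

lemma integrable_msum_dirac (f : ℂ → ℝ) (s : Multiset ℂ) :
    Integrable f ((s.map Measure.dirac).sum) := by
  induction s using Multiset.induction with
  | empty => simp [integrable_zero_measure]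
  | cons a s ih =>
      rw [Multiset.map_cons, Multiset.sum_cons]
      exact (integrable_dirac'' f a).add_measure ih

lemma integral_msum_dirac (f : ℂ → ℝ) (s : Multiset ℂ) :
    ∫ z, f z ∂((s.map Measure.dirac).sum) = (s.map f).sum := by
  induction s using Multiset.induction with
  | empty => simp
  | cons a s ih =>
      rw [Multiset.map_cons, Multiset.sum_cons,
        integral_add_measure (integrable_dirac'' f a) (integrable_msum_dirac f s),
        integral_dirac, Multiset.map_cons, Multiset.sum_cons, ih]

lemma setIntegral_dirac_compl0 (f : ℂ → ℝ) (hf0 : f 0 = 0) (a : ℂ) :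
    ∫ z in {(0:ℂ)}ᶜ, f z ∂(Measure.dirac a) = f a := by
  classical
  rw [MeasureTheory.restrict_dirac' (by measurability)]
  by_cases h : a = 0
  · simp [h, hf0]
  · simp [h, integral_dirac]

lemma setIntegral_msum_dirac (f : ℂ → ℝ) (hf0 : f 0 = 0) (s : Multiset ℂ) :
    ∫ z in {(0:ℂ)}ᶜ, f z ∂((s.map Measure.dirac).sum) = (s.map f).sum := by
  induction s using Multiset.induction with
  | empty => simp
  | cons a s ih =>
      rw [Multiset.map_cons, Multiset.sum_cons, Measure.restrict_add,
        integral_add_measure ((integrable_dirac'' f a).restrict)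
          ((integrable_msum_dirac f s).restrict),
        setIntegral_dirac_compl0 f hf0, Multiset.map_cons, Multiset.sum_cons, ih]

lemma log_multiset_prod (s : Multiset ℝ) (hs : ∀ x ∈ s, x ≠ 0) :
    Real.log s.prod = (s.map Real.log).sum := by
  induction s using Multiset.induction with
  | empty => simp
  | cons a s ih =>
      rw [Multiset.prod_cons, Real.log_mul (hs a (by simp)) ?_, Multiset.map_cons,
        Multiset.sum_cons, ih (fun x hx => hs x (by simp [hx]))]
      exact Multiset.prod_ne_zero (fun h => hs 0 (by simp [h]) rfl)


section test
variable {n : ℕ} {c L : ℝ} {α β : ℂ}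

lemma root_lt_L (hn : 2 ≤ n) (hc0 : 0 ≤ c) (hL : 4 ≤ L) (hcl : 2 * c ≤ L ^ (n-1))
    (hab : ‖α‖ ^ n ≤ c * ‖α‖ + 2) : ‖α‖ < L := by
  by_contra hα
  push_neg at hα
  set a := ‖α‖ with ha
  have ha4 : 4 ≤ a := le_trans hL hα
  have h1 : L ^ (n-1) ≤ a ^ (n-1) := pow_le_pow_left₀ (by linarith) hα _
  have h2 : a ^ (n-1) * a = a ^ n := by
    rw [← pow_succ]; congr 1; omega
  have h3 : a ^ n ≤ (a ^ n) / 2 + 2 := by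
    calc a ^ n ≤ c * a + 2 := hab
      _ ≤ (L ^ (n-1) / 2) * a + 2 := by nlinarith
      _ ≤ (a ^ (n-1) / 2) * a + 2 := by nlinarith
      _ = (a ^ n) / 2 + 2 := by rw [← h2]; ring
  have h4 : a ^ n ≤ 4 := by linarith
  have h5 : (4:ℝ) ^ 2 ≤ a ^ n := by
    calc (4:ℝ)^2 ≤ (4:ℝ)^n := pow_le_pow_right₀ (by norm_num) hn
      _ ≤ a ^ n := pow_le_pow_left₀ (by norm_num) ha4 _
  norm_num at h5; linarith

lemma small_root_bound (hc0 : 0 ≤ c)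
    (hab : c * ‖α‖ ≤ ‖α‖ ^ n + 2) (h1 : ‖α‖ < 1) :
    c * ‖α‖ ≤ 3 := by
  have : ‖α‖ ^ n ≤ 1 := pow_le_one₀ (norm_nonneg α) h1.le
  linarith

lemma no_mid_root (hn : 2 ≤ n) (hc : (2:ℝ)^(n+1) ≤ c)
    (hab : c * ‖α‖ ≤ ‖α‖ ^ n + 2) (h1 : 1 ≤ ‖α‖) :
    2 < ‖α‖ := by
  by_contra hα
  push_neg at hα
  have h2 : c ≤ c * ‖α‖ := by nlinarith [le_trans (by norm_num : (0:ℝ) ≤ 2^(n+1)) hc]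
  have h3 : ‖α‖ ^ n ≤ 2 ^ n := pow_le_pow_left₀ (norm_nonneg α) hα _
  have h4 : (2:ℝ)^n + 2 < 2^(n+1) := by
    have : (4:ℝ) ≤ 2^n := by
      calc (4:ℝ) = 2^2 := by norm_num
        _ ≤ 2^n := pow_le_pow_right₀ (by norm_num) hn
    rw [pow_succ]; linarith
  linarith

lemma two_roots_false (hcn : (n:ℝ) < c)
    (hα : α ^ n + c * α + 2 = 0) (hβ : β ^ n + c * β + 2 = 0)
    (h1 : ‖α‖ < 1) (h2 : ‖β‖ < 1) (hne : α ≠ β) : False := by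
  have hc0 : 0 ≤ c := le_trans (Nat.cast_nonneg n) hcn.le
  have key : (∑ i ∈ Finset.range n, α ^ i * β ^ (n - 1 - i)) * (α - β) = α ^ n - β ^ n :=
    geom_sum₂_mul α β n
  have h3 : (∑ i ∈ Finset.range n, α ^ i * β ^ (n - 1 - i) + c) * (α - β) = 0 := by
    rw [add_mul, key]
    linear_combination hα - hβ
  have h4 : (∑ i ∈ Finset.range n, α ^ i * β ^ (n - 1 - i)) = -c := by
    rcases mul_eq_zero.mp h3 with h | h
    · linear_combination h
    · exact absurd (sub_eq_zero.mp h) hne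
  have h5 : ‖∑ i ∈ Finset.range n, α ^ i * β ^ (n - 1 - i)‖ ≤ n := by
    calc ‖∑ i ∈ Finset.range n, α ^ i * β ^ (n - 1 - i)‖
        ≤ ∑ i ∈ Finset.range n, ‖α ^ i * β ^ (n - 1 - i)‖ := by
          exact norm_sum_le _ _
      _ ≤ ∑ _i ∈ Finset.range n, (1:ℝ) := by
          apply Finset.sum_le_sum
          intro i _
          rw [norm_mul, norm_pow, norm_pow]
          exact mul_le_one₀ (pow_le_one₀ (norm_nonneg _) h1.le) (by positivity)
            (pow_le_one₀ (norm_nonneg _) h2.le)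
      _ = n := by simp
  rw [h4] at h5
  simp only [norm_neg] at h5
  rw [Complex.norm_of_nonneg hc0] at h5
  linarith

lemma pow_root_false (hn : 2 ≤ n) (hcn : (n:ℝ) < c)
    (hdvd : (X - C α)^2 ∣ (X ^ n + C (c:ℂ) * X + C 2)) (h1 : ‖α‖ < 1) : False := by
  have hc0 : 0 ≤ c := le_trans (Nat.cast_nonneg n) hcn.le
  obtain ⟨R, hR⟩ := hdvd
  have hder : (derivative (X ^ n + C (c:ℂ) * X + C 2)).eval α = 0 := by
    rw [hR, derivative_mul, derivative_pow]
    simp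
  rw [derivative_add, derivative_add, derivative_X_pow, derivative_C,
    derivative_C_mul, derivative_X] at hder
  simp at hder
  -- hder : n * α^(n-1) + c = 0
  have h6 : ‖(n:ℂ) * α ^ (n-1)‖ = c := by
    have : (n:ℂ) * α ^ (n-1) = -c := by linear_combination hder
    rw [this, norm_neg, Complex.norm_of_nonneg hc0]
  have h7 : ‖(n:ℂ) * α ^ (n-1)‖ ≤ n := by
    rw [norm_mul, norm_pow, Complex.norm_natCast]
    calc (n:ℝ) * ‖α‖ ^ (n-1) ≤ (n:ℝ) * 1 :=
        mul_le_mul_of_nonneg_left (pow_le_one₀ (norm_nonneg _) h1.le) (Nat.cast_nonneg n)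
      _ = (n:ℝ) := by norm_num
  rw [h6] at h7
  linarith

lemma exists_real_root (hn : 2 ≤ n) (hc3 : 3 < c) :
    ∃ x : ℝ, x ^ n + c * x + 2 = 0 ∧ |x| < 1 := by
  have hcont : ContinuousOn (fun x : ℝ => x ^ n + c * x + 2) (Set.Icc (-1) 0) := by
    fun_prop
  have hm1 : (-1:ℝ) ^ n + c * (-1) + 2 < 0 := by
    have h : (-1:ℝ)^n ≤ 1 := by
      rcases Nat.even_or_odd n with h | h
      · rw [h.neg_one_pow]
      · rw [h.neg_one_pow]; norm_num
    linarith
  have h0 : (0:ℝ) ^ n + c * 0 + 2 = 2 := by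
    rw [zero_pow (by omega)]; ring
  obtain ⟨x, hx, hfx⟩ := intermediate_value_Icc (by norm_num : (-1:ℝ) ≤ 0) hcont
    (Set.mem_Icc.mpr ⟨by simpa using hm1.le, by rw [h0]; norm_num⟩)
  refine ⟨x, hfx, ?_⟩
  have hne : x ≠ -1 := by
    intro h; rw [h] at hfx; simp only at hfx; linarith
  rcases Set.mem_Icc.mp hx with ⟨hx1, hx2⟩
  rw [abs_lt]
  constructor
  · rcases lt_or_eq_of_le hx1 with h | h
    · exact h
    · exact absurd h.symm hne
  · linarith

end test

noncomputable def QQ (n : ℕ) (c : ℝ) : Polynomial ℂ :=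
  X ^ n + C (c : ℂ) * X + C 2

lemma QQ_monic {n : ℕ} (hn : 2 ≤ n) (c : ℝ) : (QQ n c).Monic := by
  unfold QQ
  rw [add_assoc]
  apply monic_X_pow_add
  calc (C (c:ℂ) * X + C 2).degree ≤ 1 := degree_linear_le
    _ < (n : WithBot ℕ) := by exact_mod_cast (by omega : 1 < n)

lemma QQ_natDegree {n : ℕ} (hn : 2 ≤ n) (c : ℝ) : (QQ n c).natDegree = n := by
  unfold QQ
  rw [add_assoc]
  have h : (C (c:ℂ) * X + C 2).natDegree < (X ^ n : Polynomial ℂ).natDegree := by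
    rw [natDegree_X_pow]
    have : (C (c:ℂ) * X + C 2).natDegree ≤ 1 := natDegree_linear_le
    omega
  rw [natDegree_add_eq_left_of_natDegree_lt h, natDegree_X_pow]

lemma QQ_ne_zero {n : ℕ} (hn : 2 ≤ n) (c : ℝ) : QQ n c ≠ 0 :=
  (QQ_monic hn c).ne_zero

lemma QQ_eval (n : ℕ) (c : ℝ) (α : ℂ) : (QQ n c).eval α = α ^ n + c * α + 2 := by
  simp [QQ]

lemma QQ_root_iff {n : ℕ} {c : ℝ} {α : ℂ} (hn : 2 ≤ n) :
    α ∈ (QQ n c).roots ↔ α ^ n + c * α + 2 = 0 := by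
  rw [mem_roots (QQ_ne_zero hn c), IsRoot, QQ_eval]

lemma QQ_roots_card {n : ℕ} (hn : 2 ≤ n) (c : ℝ) :
    Multiset.card (QQ n c).roots = n := by
  conv_rhs => rw [← QQ_natDegree hn c]
  exact (splits_iff_card_roots.mp (IsAlgClosed.splits _))

-- basic root inequalities
lemma root_ineq1 {n : ℕ} {c : ℝ} (hc0 : 0 ≤ c) {α : ℂ}
    (h : α ^ n + c * α + 2 = 0) :
    ‖α‖ ^ n ≤ c * ‖α‖ + 2 := by
  have : α ^ n = -(c * α + 2) := by linear_combination h
  calc ‖α‖ ^ n = ‖α ^ n‖ := by rw [norm_pow]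
    _ = ‖c * α + 2‖ := by rw [this, norm_neg]
    _ ≤ ‖(c:ℂ) * α‖ + ‖2‖ := norm_add_le _ _
    _ = c * ‖α‖ + 2 := by
        rw [norm_mul]; simp [Complex.norm_real, abs_of_nonneg hc0]

lemma root_ineq2 {n : ℕ} {c : ℝ} (hc0 : 0 ≤ c) {α : ℂ}
    (h : α ^ n + c * α + 2 = 0) :
    c * ‖α‖ ≤ ‖α‖ ^ n + 2 := by
  have : (c : ℂ) * α = -(α ^ n + 2) := by linear_combination h
  calc c * ‖α‖ = ‖(c:ℂ) * α‖ := by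
        rw [norm_mul]; simp [Complex.norm_real, abs_of_nonneg hc0]
    _ = ‖α ^ n + 2‖ := by rw [this, norm_neg]
    _ ≤ ‖α ^ n‖ + ‖2‖ := norm_add_le _ _
    _ = ‖α‖ ^ n + 2 := by rw [norm_pow]; simp




section test
variable {n : ℕ} {c : ℝ}

lemma QQ_filter_card (hn : 2 ≤ n) (hcn : (n:ℝ) < c) (hc3 : 3 < c) :
    Multiset.card ((QQ n c).roots.filter (fun z => ‖z‖ < 1)) = 1 := by
  classical
  set s := (QQ n c).roots with hs
  set t := s.filter (fun z => ‖z‖ < 1) with ht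
  have hle : t.card ≤ 1 := by
    by_contra hcard
    push_neg at hcard
    have h2 : 2 ≤ t.card := hcard
    have hpos : 0 < t.card := by omega
    obtain ⟨a, ha⟩ := Multiset.card_pos_iff_exists_mem.mp hpos
    obtain ⟨t', ht'⟩ := Multiset.exists_cons_of_mem ha
    have hct' : 0 < t'.card := by
      have := congrArg Multiset.card ht'
      rw [Multiset.card_cons] at this
      omega
    obtain ⟨b, hb⟩ := Multiset.card_pos_iff_exists_mem.mp hct'
    have hbt : b ∈ t := by rw [ht']; exact Multiset.mem_cons_of_mem hb
    have haprop := Multiset.mem_filter.mp ha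
    have hbprop := Multiset.mem_filter.mp hbt
    by_cases hab : a = b
    · subst hab
      have hcount : 2 ≤ t.count a := by
        rw [ht', Multiset.count_cons_self]
        have : 1 ≤ t'.count a := Multiset.one_le_count_iff_mem.mpr hb
        omega
      have hcs : t.count a ≤ s.count a := Multiset.count_le_of_le a (Multiset.filter_le _ s)
      have hrm : 2 ≤ rootMultiplicity a (QQ n c) := by
        rw [← count_roots, ← hs]; omega
      have hdvd : (X - C a)^2 ∣ QQ n c :=
        dvd_trans (pow_dvd_pow _ hrm) (pow_rootMultiplicity_dvd _ a)
      exact pow_root_false hn hcn hdvd haprop.2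
    · exact two_roots_false hcn ((QQ_root_iff hn).mp haprop.1) ((QQ_root_iff hn).mp hbprop.1)
        haprop.2 hbprop.2 hab
  have hge : 1 ≤ t.card := by
    obtain ⟨x, hx, hx1⟩ := exists_real_root hn hc3
    have hxroot : ((x:ℂ)) ∈ s := by
      rw [hs, QQ_root_iff hn]
      have := congrArg (fun r : ℝ => (r : ℂ)) hx
      push_cast at this
      simpa using this
    have hxt : (x:ℂ) ∈ t := Multiset.mem_filter.mpr ⟨hxroot, by
      simpa [Complex.norm_real] using hx1⟩
    have := Multiset.card_pos_iff_exists_mem.mpr ⟨_, hxt⟩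
    omega
  omega

lemma QQ_prod_roots_abs (hn : 2 ≤ n) (c : ℝ) :
    ‖(QQ n c).roots.prod‖ = 2 := by
  have h := (IsAlgClosed.splits (QQ n c)).coeff_zero_eq_prod_roots_of_monic (QQ_monic hn c)
  have hc0 : (QQ n c).coeff 0 = 2 := by
    unfold QQ
    rw [coeff_add, coeff_add, coeff_X_pow, coeff_C_mul, coeff_X_zero, coeff_C]
    simp
    omega
  rw [hc0] at h
  have := congrArg norm h
  rw [norm_mul, norm_pow, norm_neg, norm_one, one_pow, one_mul] at this
  simp at this ⊢
  linarith

lemma QQ_roots_ne_zero (hn : 2 ≤ n) {z : ℂ} (hz : z ∈ (QQ n c).roots) : z ≠ 0 := by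
  intro h
  subst h
  rw [QQ_root_iff hn] at hz
  rw [zero_pow (by omega), mul_zero] at hz
  norm_num at hz
end test




-- integer-side lemmas
lemma cInt_key {l : ℕ} (hev : Even l) {n : ℕ} (hn : 2 ≤ n) :
    2 * ((l:ℤ)^(n-1)/2) = (l:ℤ)^(n-1) := by
  apply Int.mul_ediv_cancel'
  obtain ⟨m, hm⟩ := hev
  have h2 : (2:ℤ) ∣ (l:ℤ) := ⟨m, by rw [hm]; push_cast; ring⟩
  exact dvd_pow h2 (by omega)

lemma cR_key {l : ℕ} (hev : Even l) {n : ℕ} (hn : 2 ≤ n) :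
    2 * (((l:ℤ)^(n-1)/2 : ℤ) : ℝ) = (l:ℝ)^(n-1) := by
  exact_mod_cast congrArg (fun z : ℤ => (z:ℝ)) (cInt_key hev hn)

lemma cR_lb {l : ℕ} (hev : Even l) (hl : 4 ≤ l) {n : ℕ} (hn : 4 ≤ n) :
    (2:ℝ)^(n+1) ≤ (((l:ℤ)^(n-1)/2 : ℤ) : ℝ) := by
  have h1 : (4:ℝ)^(n-1) ≤ (l:ℝ)^(n-1) :=
    pow_le_pow_left₀ (by norm_num) (by exact_mod_cast hl) _
  have h2 : ((4:ℝ))^(n-1) = 2^(2*(n-1)) := by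
    rw [pow_mul]; norm_num
  have h3 : (2:ℝ)^(n+2) ≤ 2^(2*(n-1)) := pow_le_pow_right₀ (by norm_num) (by omega)
  have h4 : (2:ℝ)^(n+2) = 2 * 2^(n+1) := by ring
  have h5 := cR_key hev (by omega : 2 ≤ n)
  linarith

lemma n_lt_two_pow (n : ℕ) : (n:ℝ) < 2^(n+1) := by
  have h : n < 2^(n+1) := lt_of_lt_of_le Nat.lt_two_pow_self (Nat.pow_le_pow_right (by norm_num) (by omega))
  exact_mod_cast h

-- the map
lemma P_map (l : ℕ) (n : ℕ) :
    ((X^n + C ((l:ℤ)^(n-1)/2) * X + C 2 : Polynomial ℤ).map (Int.castRingHom ℂ))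
      = QQ n (((l:ℤ)^(n-1)/2 : ℤ) : ℝ) := by
  unfold QQ
  rw [Polynomial.map_add, Polynomial.map_add, Polynomial.map_pow, Polynomial.map_mul,
    Polynomial.map_X, Polynomial.map_C, Polynomial.map_C]
  push_cast
  norm_num

lemma P_monic (a b : ℤ) {n : ℕ} (hn : 2 ≤ n) : (X^n + C a * X + C b : Polynomial ℤ).Monic := by
  rw [add_assoc]
  apply monic_X_pow_add
  calc (C a * X + C b).degree ≤ 1 := degree_linear_le
    _ < (n : WithBot ℕ) := by exact_mod_cast (by omega : 1 < n)

lemma P_natDegree (a b : ℤ) {n : ℕ} (hn : 2 ≤ n) :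
    (X^n + C a * X + C b : Polynomial ℤ).natDegree = n := by
  rw [add_assoc]
  have h : (C a * X + C b).natDegree < (X ^ n : Polynomial ℤ).natDegree := by
    rw [natDegree_X_pow]
    have : (C a * X + C b).natDegree ≤ 1 := natDegree_linear_le
    omega
  rw [natDegree_add_eq_left_of_natDegree_lt h, natDegree_X_pow]






lemma Delta_setIntegral (p : Polynomial ℤ) (f : ℂ → ℝ) (hf0 : f 0 = 0) :
    ∫ z in {(0:ℂ)}ᶜ, f z ∂(Delta p)
      = ((p.natDegree : ℝ))⁻¹ * ((rootsC p).map f).sum := by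
  unfold Delta
  rw [Measure.restrict_smul, integral_smul_measure, setIntegral_msum_dirac f hf0]
  rw [ENNReal.toReal_inv, smul_eq_mul]
  norm_num

lemma Delta_integral (p : Polynomial ℤ) (f : ℂ → ℝ) :
    ∫ z, f z ∂(Delta p) = ((p.natDegree : ℝ))⁻¹ * ((rootsC p).map f).sum := by
  unfold Delta
  rw [integral_smul_measure, integral_msum_dirac f]
  rw [ENNReal.toReal_inv, smul_eq_mul]
  norm_num

-- bounded continuous functions
noncomputable def bcfG (r : ℝ) : BoundedContinuousFunction ℂ ℝ :=
  BoundedContinuousFunction.mkOfBound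
    ⟨fun z => min (max (‖z‖ - r) 0) 1, ((continuous_norm.sub continuous_const).max continuous_const).min continuous_const⟩ 1
    (by
      intro x y
      simp only [ContinuousMap.coe_mk]
      rw [Real.dist_eq]
      have h1 : ∀ z : ℂ, 0 ≤ min (max (‖z‖ - r) 0) 1 := fun z =>
        le_min (le_max_right _ _) zero_le_one
      have h2 : ∀ z : ℂ, min (max (‖z‖ - r) 0) 1 ≤ 1 := fun z => min_le_right _ _
      rw [abs_le]
      constructor <;> [linarith [h1 x, h2 y]; linarith [h1 y, h2 x]])

noncomputable def bcfG2 : BoundedContinuousFunction ℂ ℝ :=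
  BoundedContinuousFunction.mkOfBound
    ⟨fun z => max (1 - ‖z‖) 0, (continuous_const.sub continuous_norm).max continuous_const⟩ 1
    (by
      intro x y
      simp only [ContinuousMap.coe_mk]
      rw [Real.dist_eq]
      have h1 : ∀ z : ℂ, 0 ≤ max (1 - ‖z‖) 0 := fun z => le_max_right _ _
      have h2 : ∀ z : ℂ, max (1 - ‖z‖) 0 ≤ 1 := fun z =>
        max_le (by linarith [norm_nonneg z]) zero_le_one
      rw [abs_le]
      constructor <;> [linarith [h1 x, h2 y]; linarith [h1 y, h2 x]])

noncomputable def bcfH (r : ℝ) : BoundedContinuousFunction ℂ ℝ :=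
  BoundedContinuousFunction.mkOfBound
    ⟨fun z => Real.log (max 1 (min (‖z‖) r)), by
      apply Continuous.log
      · exact continuous_const.max (continuous_norm.min continuous_const)
      · intro z
        have : (1:ℝ) ≤ max 1 (min (‖z‖) r) := le_max_left _ _
        linarith⟩
    (Real.log (max 1 r))
    (by
      intro x y
      simp only [ContinuousMap.coe_mk]
      rw [Real.dist_eq]
      have h1 : ∀ z : ℂ, 0 ≤ Real.log (max 1 (min (‖z‖) r)) := fun z =>
        Real.log_nonneg (le_max_left _ _)
      have h2 : ∀ z : ℂ, Real.log (max 1 (min (‖z‖) r)) ≤ Real.log (max 1 r) := by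
        intro z
        apply Real.log_le_log (by positivity)
        apply max_le (le_max_left _ _)
        exact le_trans (min_le_right _ _) (le_max_right _ _)
      rw [abs_le]
      constructor <;> [linarith [h1 x, h2 y]; linarith [h1 y, h2 x]])

lemma bcfG_apply (r : ℝ) (z : ℂ) : bcfG r z = min (max (‖z‖ - r) 0) 1 := rfl
lemma bcfG2_apply (z : ℂ) : bcfG2 z = max (1 - ‖z‖) 0 := rfl
lemma bcfH_apply (r : ℝ) (z : ℂ) : bcfH r z = Real.log (max 1 (min (‖z‖) r)) := rfl

lemma bcfG_nonneg (r : ℝ) (z : ℂ) : 0 ≤ bcfG r z :=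
  le_min (le_max_right _ _) zero_le_one

lemma bcfG_eq_zero {r : ℝ} {z : ℂ} (h : ‖z‖ ≤ r) : bcfG r z = 0 := by
  rw [bcfG_apply]
  rw [max_eq_right (by linarith), min_eq_left zero_le_one]

lemma abs_le_of_bcfG_eq_zero {r : ℝ} {z : ℂ} (h : bcfG r z = 0) : ‖z‖ ≤ r := by
  by_contra hc
  push_neg at hc
  rw [bcfG_apply] at h
  have h1 : 0 < ‖z‖ - r := by linarith
  have : 0 < min (max (‖z‖ - r) 0) 1 :=
    lt_min (lt_of_lt_of_le h1 (le_max_left _ _)) one_pos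
  linarith

lemma bcfG2_nonneg (z : ℂ) : 0 ≤ bcfG2 z := le_max_right _ _
lemma bcfG2_le_one (z : ℂ) : bcfG2 z ≤ 1 := by
  rw [bcfG2_apply]
  exact max_le (by linarith [norm_nonneg z]) zero_le_one
lemma bcfG2_eq_zero {z : ℂ} (h : 1 ≤ ‖z‖) : bcfG2 z = 0 := by
  rw [bcfG2_apply, max_eq_right (by linarith)]
lemma one_le_abs_of_bcfG2_eq_zero {z : ℂ} (h : bcfG2 z = 0) : 1 ≤ ‖z‖ := by
  by_contra hc
  push_neg at hc
  rw [bcfG2_apply] at h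
  have : 0 < max (1 - ‖z‖) 0 := lt_of_lt_of_le (by linarith) (le_max_left _ _)
  linarith

lemma bcfH_nonneg (r : ℝ) (z : ℂ) : 0 ≤ bcfH r z := Real.log_nonneg (le_max_left _ _)
lemma bcfH_ge_log2 {r : ℝ} {z : ℂ} (hr : 2 ≤ r) (hz : 2 ≤ ‖z‖) :
    Real.log 2 ≤ bcfH r z := by
  rw [bcfH_apply]
  apply Real.log_le_log (by norm_num)
  exact le_trans (le_min hz hr) (le_max_right _ _)
lemma bcfH_eq_log {r : ℝ} {z : ℂ} (h1 : 1 ≤ ‖z‖) (h2 : ‖z‖ ≤ r) :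
    bcfH r z = Real.log (‖z‖) := by
  rw [bcfH_apply, min_eq_left h2, max_eq_right h1]






lemma master (l : ℕ) (hev : Even l) (hl : 4 ≤ l) {n : ℕ} (hn : 4 ≤ n) :
    (X^n + C ((l:ℤ)^(n-1)/2) * X + C 2 : Polynomial ℤ).Monic ∧
    (X^n + C ((l:ℤ)^(n-1)/2) * X + C 2 : Polynomial ℤ).natDegree = n ∧
    Multiset.card (rootsC (X^n + C ((l:ℤ)^(n-1)/2) * X + C 2)) = n ∧
    (∀ α ∈ rootsC (X^n + C ((l:ℤ)^(n-1)/2) * X + C 2), ‖α‖ < l) ∧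
    Multiset.card ((rootsC (X^n + C ((l:ℤ)^(n-1)/2) * X + C 2)).filter
      (fun z => ‖z‖ < 1)) = 1 ∧
    (∀ α ∈ rootsC (X^n + C ((l:ℤ)^(n-1)/2) * X + C 2), ‖α‖ < 1 →
      ‖α‖ ≤ (l:ℝ) ^ (1 - (n:ℝ)/2)) ∧
    (∀ α ∈ rootsC (X^n + C ((l:ℤ)^(n-1)/2) * X + C 2), ¬(‖α‖ < 1) →
      2 < ‖α‖) ∧
    (∀ α ∈ rootsC (X^n + C ((l:ℤ)^(n-1)/2) * X + C 2), α ≠ 0) ∧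
    ‖(rootsC (X^n + C ((l:ℤ)^(n-1)/2) * X + C 2)).prod‖ = 2 := by
  have hn2 : 2 ≤ n := by omega
  set c : ℝ := (((l:ℤ)^(n-1)/2 : ℤ) : ℝ) with hc
  have hroots : rootsC (X^n + C ((l:ℤ)^(n-1)/2) * X + C 2) = (QQ n c).roots := by
    unfold rootsC
    rw [P_map l n]
  have hc2n : (2:ℝ)^(n+1) ≤ c := cR_lb hev hl hn
  have h32 : (32:ℝ) ≤ 2^(n+1) := by
    calc (32:ℝ) = 2^5 := by norm_num
      _ ≤ 2^(n+1) := pow_le_pow_right₀ (by norm_num) (by omega)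
  have hc3 : (3:ℝ) < c := by linarith
  have hcn : (n:ℝ) < c := lt_of_lt_of_le (n_lt_two_pow n) hc2n
  have hc0 : (0:ℝ) ≤ c := by linarith
  have hkey : 2 * c = (l:ℝ)^(n-1) := cR_key hev hn2
  have hL4 : (4:ℝ) ≤ (l:ℝ) := by exact_mod_cast hl
  refine ⟨P_monic _ _ hn2, P_natDegree _ _ hn2, ?_, ?_, ?_, ?_, ?_, ?_, ?_⟩
  · rw [hroots]; exact QQ_roots_card hn2 c
  · intro α hα
    rw [hroots, QQ_root_iff hn2] at hα
    exact root_lt_L hn2 hc0 hL4 (le_of_eq hkey) (root_ineq1 hc0 hα)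
  · rw [hroots]; exact QQ_filter_card hn2 hcn hc3
  · intro α hα h1
    rw [hroots, QQ_root_iff hn2] at hα
    have hsm : c * ‖α‖ ≤ 3 := small_root_bound hc0 (root_ineq2 hc0 hα) h1
    have hl0 : (0:ℝ) < (l:ℝ) := by linarith
    have hpow_pos : (0:ℝ) < (l:ℝ)^(n-1) := by positivity
    have habs : ‖α‖ * (l:ℝ)^(n-1) ≤ 6 := by
      rw [← hkey]; nlinarith [norm_nonneg α]
    have hprod : (l:ℝ)^((1:ℝ) - (n:ℝ)/2) * (l:ℝ)^(n-1) = (l:ℝ)^((n:ℝ)/2) := by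
      rw [← Real.rpow_natCast (l:ℝ) (n-1), ← Real.rpow_add hl0]
      congr 1
      have : ((n-1 : ℕ):ℝ) = (n:ℝ) - 1 := by
        have : (1:ℕ) ≤ n := by omega
        push_cast [this]
        ring
      rw [this]
      ring
    have h6 : (6:ℝ) ≤ (l:ℝ)^((n:ℝ)/2) := by
      have h1' : (4:ℝ)^((2:ℝ)) ≤ (4:ℝ)^((n:ℝ)/2) := by
        rw [Real.rpow_le_rpow_left_iff (by norm_num)]
        have : (4:ℝ) ≤ (n:ℝ) := by exact_mod_cast hn
        linarith
      have h2' : (4:ℝ)^((n:ℝ)/2) ≤ (l:ℝ)^((n:ℝ)/2) :=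
        Real.rpow_le_rpow (by norm_num) hL4 (by positivity)
      have h3' : (4:ℝ)^((2:ℝ)) = 16 := by
        rw [show ((2:ℝ)) = ((2:ℕ):ℝ) by norm_num, Real.rpow_natCast]
        norm_num
      linarith
    have h7 : (6:ℝ) / (l:ℝ)^(n-1) ≤ (l:ℝ)^((1:ℝ) - (n:ℝ)/2) := by
      rw [div_le_iff₀ hpow_pos, hprod]
      exact h6
    rw [← le_div_iff₀ hpow_pos] at habs
    calc ‖α‖ ≤ 6 / (l:ℝ)^(n-1) := habs
      _ ≤ (l:ℝ)^((1:ℝ) - (n:ℝ)/2) := h7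
  · intro α hα h1
    push_neg at h1
    rw [hroots, QQ_root_iff hn2] at hα
    exact no_mid_root hn2 hc2n (root_ineq2 hc0 hα) h1
  · intro α hα
    rw [hroots] at hα
    exact QQ_roots_ne_zero hn2 hα
  · rw [hroots]; exact QQ_prod_roots_abs hn2 c








theorem stmt13 (l : ℕ) (hev : Even l) (hl : 4 ≤ l)
    (P : ℕ → Polynomial ℤ)
    (hP : P = fun n => Polynomial.X ^ n +
      Polynomial.C ((l : ℤ) ^ (n - 1) / 2) * Polynomial.X + Polynomial.C 2) :
    (∃ N : ℕ, ∀ n ≥ N,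
      (P n).Monic ∧
      (∀ α ∈ rootsC (P n), ‖α‖ < l) ∧
      ((rootsC (P n)).filter (fun z => ‖z‖ < 1)).card = 1 ∧
      (∀ α ∈ rootsC (P n), ‖α‖ < 1 →
        ‖α‖ ≤ (l : ℝ) ^ (1 - (n : ℝ) / 2))) ∧
    ∀ (μ : Measure ℂ) (φ : ℕ → ℕ), StrictMono φ →
      WeakLim (fun k => Delta (P (φ k))) μ →
      Filter.limsup
          (fun n => ∫ z in {(0:ℂ)}ᶜ, Real.log (‖z‖) ∂(Delta (P n))) atTop
        < ∫ z in {(0:ℂ)}ᶜ, Real.log (‖z‖) ∂μ := by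
  subst hP
  have hmaster : ∀ n : ℕ, 4 ≤ n → _ := fun n hn => master l hev hl (n := n) hn
  constructor
  · exact ⟨4, fun n hn =>
      ⟨(hmaster n hn).1, (hmaster n hn).2.2.2.1, (hmaster n hn).2.2.2.2.1,
        (hmaster n hn).2.2.2.2.2.1⟩⟩
  intro μ φ hφ hW
  -- the value of the log-integral for n ≥ 4
  have haval : ∀ n : ℕ, 4 ≤ n →
      (∫ z in {(0:ℂ)}ᶜ, Real.log (‖z‖)
        ∂(Delta (X^n + C ((l:ℤ)^(n-1)/2) * X + C 2))) = (n:ℝ)⁻¹ * Real.log 2 := by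
    intro n hn
    obtain ⟨-, hdeg, -, -, -, -, -, hne0, hprod⟩ := hmaster n hn
    rw [Delta_setIntegral _ _ (by simp), hdeg]
    congr 1
    set s := rootsC (X^n + C ((l:ℤ)^(n-1)/2) * X + C 2) with hs
    have h1 : s.map (fun z => Real.log (‖z‖)) = (s.map (fun z => ‖z‖)).map Real.log := by
      rw [Multiset.map_map]; rfl
    rw [h1, ← log_multiset_prod _ (by
      intro x hx
      obtain ⟨z, hz, rfl⟩ := Multiset.mem_map.mp hx
      simpa using hne0 z hz)]
    rw [show (s.map (fun z => ‖z‖)).prod = ‖s.prod‖ from (map_multiset_prod normHom s).symm, hprod]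
  -- limsup = 0
  have hlimsup : Filter.limsup
      (fun n => ∫ z in {(0:ℂ)}ᶜ, Real.log (‖z‖)
        ∂(Delta ((fun n => X^n + C ((l:ℤ)^(n-1)/2) * X + C 2) n))) atTop = 0 := by
    apply Filter.Tendsto.limsup_eq
    apply Filter.Tendsto.congr' (f₁ := fun n : ℕ => (n:ℝ)⁻¹ * Real.log 2)
    · filter_upwards [eventually_ge_atTop 4] with n hn
      exact (haval n hn).symm
    · simpa using tendsto_inv_atTop_nhds_zero_nat.mul_const (Real.log 2)
  rw [hlimsup]
  -- properties along the subsequence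
  have hφ4 : ∀ᶠ k in atTop, 4 ≤ φ k := by
    filter_upwards [eventually_ge_atTop 4] with k hk
    exact le_trans hk hφ.le_apply
  have hinv0 : Tendsto (fun k => ((φ k : ℕ):ℝ)⁻¹) atTop (nhds 0) :=
    tendsto_inv_atTop_nhds_zero_nat.comp hφ.tendsto_atTop
  have hl2 : (2:ℝ) ≤ (l:ℝ) := by
    have : (4:ℝ) ≤ (l:ℝ) := by exact_mod_cast hl
    linarith
  -- integral of const 1
  have hIone : ∀ n : ℕ, 4 ≤ n →
      ∫ z, (BoundedContinuousFunction.const ℂ (1:ℝ)) z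
        ∂(Delta (X^n + C ((l:ℤ)^(n-1)/2) * X + C 2)) = 1 := by
    intro n hn
    obtain ⟨-, hdeg, hcard, -, -, -, -, -, -⟩ := hmaster n hn
    rw [Delta_integral, hdeg]
    simp only [BoundedContinuousFunction.const_apply]
    rw [Multiset.map_const', Multiset.sum_replicate, hcard, nsmul_eq_mul, mul_one]
    rw [inv_mul_cancel₀ (by positivity)]
  have hIG : ∀ n : ℕ, 4 ≤ n →
      ∫ z, (bcfG l) z ∂(Delta (X^n + C ((l:ℤ)^(n-1)/2) * X + C 2)) = 0 := by
    intro n hn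
    obtain ⟨-, -, -, houter, -, -, -, -, -⟩ := hmaster n hn
    rw [Delta_integral]
    rw [Multiset.sum_eq_zero, mul_zero]
    intro x hx
    obtain ⟨z, hz, rfl⟩ := Multiset.mem_map.mp hx
    exact bcfG_eq_zero (houter z hz).le
  have hIG2 : ∀ n : ℕ, 4 ≤ n →
      ∫ z, bcfG2 z ∂(Delta (X^n + C ((l:ℤ)^(n-1)/2) * X + C 2)) ≤ (n:ℝ)⁻¹ := by
    intro n hn
    obtain ⟨-, hdeg, hcard, -, hfcard, -, -, -, -⟩ := hmaster n hn
    rw [Delta_integral, hdeg]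
    set s := rootsC (X^n + C ((l:ℤ)^(n-1)/2) * X + C 2) with hs
    have hsum : (s.map (fun z => bcfG2 z)).sum ≤ 1 := by
      classical
      nth_rewrite 1 [← Multiset.filter_add_not (fun z => ‖z‖ < 1) s]
      rw [Multiset.map_add, Multiset.sum_add]
      have hA : ((s.filter (fun z => ‖z‖ < 1)).map (fun z => bcfG2 z)).sum ≤ 1 := by
        calc ((s.filter (fun z => ‖z‖ < 1)).map (fun z => bcfG2 z)).sum
            ≤ Multiset.card ((s.filter (fun z => ‖z‖ < 1)).map
              (fun z => bcfG2 z)) • (1:ℝ) := by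
              apply Multiset.sum_le_card_nsmul
              intro x hx
              obtain ⟨z, hz, rfl⟩ := Multiset.mem_map.mp hx
              exact bcfG2_le_one z
          _ = 1 := by rw [Multiset.card_map, hfcard]; simp
      have hB : ((s.filter (fun z => ¬ ‖z‖ < 1)).map (fun z => bcfG2 z)).sum = 0 := by
        apply Multiset.sum_eq_zero
        intro x hx
        obtain ⟨z, hz, rfl⟩ := Multiset.mem_map.mp hx
        have := (Multiset.mem_filter.mp hz).2
        push_neg at this
        exact bcfG2_eq_zero this
      linarith
    have hmul := mul_le_mul_of_nonneg_left hsum (show (0:ℝ) ≤ (n:ℝ)⁻¹ by positivity)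
    linarith
  have hIH : ∀ n : ℕ, 4 ≤ n →
      (1 - (n:ℝ)⁻¹) * Real.log 2 ≤
        ∫ z, (bcfH l) z ∂(Delta (X^n + C ((l:ℤ)^(n-1)/2) * X + C 2)) := by
    intro n hn
    obtain ⟨-, hdeg, hcard, -, hfcard, -, hgap, -, -⟩ := hmaster n hn
    rw [Delta_integral, hdeg]
    set s := rootsC (X^n + C ((l:ℤ)^(n-1)/2) * X + C 2) with hs
    have hsum : ((n:ℝ) - 1) * Real.log 2 ≤ (s.map (fun z => (bcfH l) z)).sum := by
      classical
      conv_rhs => rw [← Multiset.filter_add_not (fun z => ‖z‖ < 1) s]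
      rw [Multiset.map_add, Multiset.sum_add]
      have hA : (0:ℝ) ≤ ((s.filter (fun z => ‖z‖ < 1)).map
          (fun z => (bcfH l) z)).sum := by
        apply Multiset.sum_nonneg
        intro x hx
        obtain ⟨z, hz, rfl⟩ := Multiset.mem_map.mp hx
        exact bcfH_nonneg l z
      have hcard2 : Multiset.card (s.filter (fun z => ¬ ‖z‖ < 1)) = n - 1 := by
        have := congrArg Multiset.card (Multiset.filter_add_not (fun z => ‖z‖ < 1) s)
        rw [Multiset.card_add, hfcard, hcard] at this
        omega
      have hB : ((n:ℝ) - 1) * Real.log 2 ≤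
          ((s.filter (fun z => ¬ ‖z‖ < 1)).map (fun z => (bcfH l) z)).sum := by
        have h1 : Multiset.card ((s.filter (fun z => ¬ ‖z‖ < 1)).map
            (fun z => (bcfH l) z)) • Real.log 2 ≤ _ :=
          Multiset.card_nsmul_le_sum (s := (s.filter (fun z => ¬ ‖z‖ < 1)).map
            (fun z => (bcfH l) z)) (a := Real.log 2) ?_
        · rw [Multiset.card_map, hcard2, nsmul_eq_mul] at h1
          have hcast : ((n - 1 : ℕ) : ℝ) = (n:ℝ) - 1 := by
            have : (1:ℕ) ≤ n := by omega
            push_cast [this]; ring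
          rw [hcast] at h1
          exact h1
        · intro x hx
          obtain ⟨z, hz, rfl⟩ := Multiset.mem_map.mp hx
          obtain ⟨hzs, hzf⟩ := Multiset.mem_filter.mp hz
          exact bcfH_ge_log2 hl2 (hgap z hzs hzf).le
      linarith
    have hn0 : (0:ℝ) < (n:ℝ) := by positivity
    have heq : (1 - (n:ℝ)⁻¹) * Real.log 2 = (n:ℝ)⁻¹ * (((n:ℝ) - 1) * Real.log 2) := by
      field_simp
    have hmul := mul_le_mul_of_nonneg_left hsum (show (0:ℝ) ≤ (n:ℝ)⁻¹ by positivity)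
    linarith
  -- limits
  have hone : ∫ z, (BoundedContinuousFunction.const ℂ (1:ℝ)) z ∂μ = 1 := by
    apply tendsto_nhds_unique (hW (BoundedContinuousFunction.const ℂ (1:ℝ)))
    apply Filter.Tendsto.congr' _ tendsto_const_nhds
    filter_upwards [hφ4] with k hk
    exact (hIone (φ k) hk).symm
  have hfin : IsFiniteMeasure μ := by
    have h2 : (μ Set.univ).toReal = 1 := by
      rw [← hone]
      simp [MeasureTheory.integral_const, Measure.real]
    constructor
    by_contra htop
    have h3 : μ Set.univ = ⊤ := top_le_iff.mp (not_lt.mp htop)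
    rw [h3] at h2
    simp at h2
  haveI := hfin
  have hG0 : ∫ z, (bcfG l) z ∂μ = 0 := by
    apply tendsto_nhds_unique (hW (bcfG l))
    apply Filter.Tendsto.congr' _ tendsto_const_nhds
    filter_upwards [hφ4] with k hk
    exact (hIG (φ k) hk).symm
  have haeL : ∀ᵐ z ∂μ, ‖z‖ ≤ l := by
    have h := (integral_eq_zero_iff_of_nonneg (fun z => bcfG_nonneg l z)
      ((bcfG l).integrable μ)).mp hG0
    filter_upwards [h] with z hz
    exact abs_le_of_bcfG_eq_zero hz
  have hG20 : ∫ z, bcfG2 z ∂μ = 0 := by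
    have hub : ∫ z, bcfG2 z ∂μ ≤ 0 := by
      apply le_of_tendsto_of_tendsto (hW bcfG2) hinv0
      filter_upwards [hφ4] with k hk
      exact hIG2 (φ k) hk
    have hlb : 0 ≤ ∫ z, bcfG2 z ∂μ := integral_nonneg (fun z => bcfG2_nonneg z)
    linarith
  have hae1 : ∀ᵐ z ∂μ, 1 ≤ ‖z‖ := by
    have h := (integral_eq_zero_iff_of_nonneg (fun z => bcfG2_nonneg z)
      (bcfG2.integrable μ)).mp hG20
    filter_upwards [h] with z hz
    exact one_le_abs_of_bcfG2_eq_zero hz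
  have hH : Real.log 2 ≤ ∫ z, (bcfH l) z ∂μ := by
    apply le_of_tendsto_of_tendsto
      (f := fun k => (1 - ((φ k : ℕ):ℝ)⁻¹) * Real.log 2)
      _ (hW (bcfH l)) _
    · have : Tendsto (fun k => (1 - ((φ k : ℕ):ℝ)⁻¹) * Real.log 2) atTop
        (nhds ((1 - 0) * Real.log 2)) := ((tendsto_const_nhds.sub hinv0).mul_const _)
      simpa using this
    · filter_upwards [hφ4] with k hk
      exact hIH (φ k) hk
  have hmem : ∀ᵐ z ∂μ, z ∈ ({(0:ℂ)}ᶜ : Set ℂ) := by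
    filter_upwards [hae1] with z hz
    intro h0
    rw [Set.mem_singleton_iff.mp h0] at hz
    simp at hz
    linarith
  calc (0:ℝ) < Real.log 2 := Real.log_pos (by norm_num)
    _ ≤ ∫ z, (bcfH l) z ∂μ := hH
    _ = ∫ z, Real.log (‖z‖) ∂μ := by
        apply integral_congr_ae
        filter_upwards [hae1, haeL] with z h1 h2
        exact bcfH_eq_log h1 h2
    _ = ∫ z in {(0:ℂ)}ᶜ, Real.log (‖z‖) ∂μ := by
        rw [Measure.restrict_eq_self_of_ae_mem hmem]
end
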